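/- arXiv:1403.7226 — 3 statements merged into one kernel-verified Lean document; each statement's English description precedes it below -/
import Mathlib

section
/- Let k^{abc} be a Killing 3-tensor on ℝ^n. Then the third-order differential operator D defined on smooth functions f : ℝ^n → ℝ by D f = k^{abc} ∂_a ∂_b ∂_c f + (3/2)(∂_r k^{rbc}) ∂_b ∂_c f + (1/4)(∂_r ∂_s k^{rsc}) ∂_c f commutes with the Laplace operator: Δ∘D = D∘Δ on smooth functions. -/
noncomputable section

/-- Partial derivative `∂_a f` in the `a`-th coordinate direction on `ℝⁿ`. -/
def pd {n : ℕ} (a : Fin n) (f : (Fin n → ℝ) → ℝ) : (Fin n → ℝ) → ℝ :=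
  fun x => fderiv ℝ f x (Pi.single a 1)

/-- Raised partial derivative `∂^a f = g^{ab} ∂_b f`. -/
def pdUp {n : ℕ} (ginv : Matrix (Fin n) (Fin n) ℝ) (a : Fin n)
    (f : (Fin n → ℝ) → ℝ) : (Fin n → ℝ) → ℝ :=
  fun x => ∑ b, ginv a b * pd b f x

/-- Laplace operator `Δ f = g^{ab} ∂_a ∂_b f`. -/
def lap {n : ℕ} (ginv : Matrix (Fin n) (Fin n) ℝ) (f : (Fin n → ℝ) → ℝ) :
    (Fin n → ℝ) → ℝ :=
  fun x => ∑ a, ∑ b, ginv a b * pd a (pd b f) x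

/-- Iterated partial derivative `∂_{i 0} ⋯ ∂_{i (m-1)} f` along a tuple of indices. -/
def pdIter {n : ℕ} : (m : ℕ) → (Fin m → Fin n) → ((Fin n → ℝ) → ℝ) → ((Fin n → ℝ) → ℝ)
  | 0, _, f => f
  | m + 1, i, f => pd (i 0) (pdIter m (fun j => i j.succ) f)

/-- A (smooth, totally symmetric) Killing `ℓ`-tensor: `∂^{(a₀} k^{a₁…a_ℓ)} = 0`. -/
def IsKillingTensor {n : ℕ} (ginv : Matrix (Fin n) (Fin n) ℝ) (ℓ : ℕ)
    (k : (Fin ℓ → Fin n) → (Fin n → ℝ) → ℝ) : Prop :=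
  (∀ i, ContDiff ℝ (⊤ : ℕ∞) (k i)) ∧
  (∀ (σ : Equiv.Perm (Fin ℓ)) (i : Fin ℓ → Fin n), k (i ∘ σ) = k i) ∧
  (∀ (i : Fin (ℓ + 1) → Fin n) (x : Fin n → ℝ),
    ∑ σ : Equiv.Perm (Fin (ℓ + 1)),
      pdUp ginv (i (σ 0)) (k (fun j => i (σ j.succ))) x = 0)

end

noncomputable section
local notation "Smooth" => ContDiff ℝ (⊤ : ℕ∞)

theorem smooth_diff {E F : Type*} [NormedAddCommGroup E] [NormedSpace ℝ E]
    [NormedAddCommGroup F] [NormedSpace ℝ F] {f : E → F} (hf : Smooth f) :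
    Differentiable ℝ f :=
  hf.differentiable (by norm_cast)

variable {n : ℕ}

theorem pd_smooth {f : (Fin n → ℝ) → ℝ} (hf : Smooth f) (a : Fin n) :
    Smooth (pd a f) :=
  (hf.fderiv_right (by simp)).clm_apply contDiff_const

theorem pd_comm {f : (Fin n → ℝ) → ℝ} (hf : Smooth f) (a b : Fin n) :
    pd a (pd b f) = pd b (pd a f) := by
  funext x
  have h1 : ∀ (c : Fin n) (v : Fin n → ℝ),
      pd c (fun y => fderiv ℝ f y v) x = fderiv ℝ (fderiv ℝ f) x (Pi.single c 1) v := by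
    intro c v
    have hd : DifferentiableAt ℝ (fderiv ℝ f) x :=
      (smooth_diff (hf.fderiv_right (m := (⊤:ℕ∞)) (by simp))).differentiableAt
    show fderiv ℝ (fun y => fderiv ℝ f y v) x (Pi.single c 1) = _
    rw [fderiv_clm_apply (𝕜 := ℝ) hd (differentiableAt_const v)]
    simp
  have hsym := (hf.contDiffAt (x := x)).isSymmSndFDerivAt (by rw [minSmoothness_of_isRCLikeNormedField]; exact WithTop.coe_le_coe.2 (le_top : (2:ℕ∞) ≤ ⊤))
  show pd a (fun y => fderiv ℝ f y (Pi.single b 1)) x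
      = pd b (fun y => fderiv ℝ f y (Pi.single a 1)) x
  rw [h1, h1]
  exact hsym _ _

theorem pd_add {f g : (Fin n → ℝ) → ℝ} (hf : Smooth f) (hg : Smooth g) (a : Fin n) :
    pd a (fun x => f x + g x) = fun x => pd a f x + pd a g x := by
  funext x
  show fderiv ℝ (fun x => f x + g x) x (Pi.single a 1) = _
  rw [fderiv_fun_add (smooth_diff hf).differentiableAt (smooth_diff hg).differentiableAt]
  rfl

theorem pd_const_mul {f : (Fin n → ℝ) → ℝ} (hf : Smooth f) (c : ℝ) (a : Fin n) :
    pd a (fun x => c * f x) = fun x => c * pd a f x := by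
  funext x
  show fderiv ℝ (fun x => c * f x) x (Pi.single a 1) = _
  rw [fderiv_const_mul (smooth_diff hf).differentiableAt c]
  rfl

theorem pd_mul {f g : (Fin n → ℝ) → ℝ} (hf : Smooth f) (hg : Smooth g) (a : Fin n) :
    pd a (fun x => f x * g x) = fun x => pd a f x * g x + f x * pd a g x := by
  funext x
  show fderiv ℝ (fun x => f x * g x) x (Pi.single a 1) = _
  rw [fderiv_fun_mul (smooth_diff hf).differentiableAt (smooth_diff hg).differentiableAt]
  show f x * fderiv ℝ g x (Pi.single a 1) + g x * fderiv ℝ f x (Pi.single a 1) = _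
  unfold pd; ring

theorem pd_zero (a : Fin n) : pd a (fun _ => (0:ℝ)) = fun _ => 0 := by
  funext x; simp [pd]

theorem pd_sum {ι : Type*} (s : Finset ι) (F : ι → (Fin n → ℝ) → ℝ)
    (hF : ∀ i ∈ s, Smooth (F i)) (a : Fin n) :
    pd a (fun x => ∑ i ∈ s, F i x) = fun x => ∑ i ∈ s, pd a (F i) x := by
  funext x
  show fderiv ℝ (fun x => ∑ i ∈ s, F i x) x (Pi.single a 1) = _
  rw [fderiv_fun_sum (fun i hi => (smooth_diff (hF i hi)).differentiableAt)]
  simp [pd]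

theorem smooth_sum {ι : Type*} (s : Finset ι) (F : ι → (Fin n → ℝ) → ℝ)
    (hF : ∀ i ∈ s, Smooth (F i)) : Smooth (fun x => ∑ i ∈ s, F i x) :=
  ContDiff.sum hF

theorem pdUp_smooth {f : (Fin n → ℝ) → ℝ} (ginv : Matrix (Fin n) (Fin n) ℝ)
    (hf : Smooth f) (a : Fin n) : Smooth (pdUp ginv a f) :=
  ContDiff.sum fun b _ => contDiff_const.mul (pd_smooth hf b)

theorem lap_smooth {f : (Fin n → ℝ) → ℝ} (ginv : Matrix (Fin n) (Fin n) ℝ)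
    (hf : Smooth f) : Smooth (lap ginv f) :=
  ContDiff.sum fun a _ => ContDiff.sum fun b _ =>
    contDiff_const.mul (pd_smooth (pd_smooth hf b) a)

theorem pdUp_sum {ι : Type*} (ginv : Matrix (Fin n) (Fin n) ℝ) (s : Finset ι)
    (F : ι → (Fin n → ℝ) → ℝ) (hF : ∀ i ∈ s, Smooth (F i)) (a : Fin n) :
    pdUp ginv a (fun x => ∑ i ∈ s, F i x) = fun x => ∑ i ∈ s, pdUp ginv a (F i) x := by
  funext x
  show (∑ b, ginv a b * pd b (fun x => ∑ i ∈ s, F i x) x) = ∑ i ∈ s, ∑ b, ginv a b * pd b (F i) x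
  calc (∑ b, ginv a b * pd b (fun x => ∑ i ∈ s, F i x) x)
      = ∑ b, ginv a b * ∑ i ∈ s, pd b (F i) x := by
        refine Finset.sum_congr rfl fun b _ => ?_
        rw [pd_sum s F hF b]
    _ = ∑ b, ∑ i ∈ s, ginv a b * pd b (F i) x := by simp [Finset.mul_sum]
    _ = ∑ i ∈ s, ∑ b, ginv a b * pd b (F i) x := Finset.sum_comm

theorem pdUp_const_mul {f : (Fin n → ℝ) → ℝ} (ginv : Matrix (Fin n) (Fin n) ℝ)
    (hf : Smooth f) (c : ℝ) (a : Fin n) :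
    pdUp ginv a (fun x => c * f x) = fun x => c * pdUp ginv a f x := by
  funext x
  show (∑ b, ginv a b * pd b (fun x => c * f x) x) = c * ∑ b, ginv a b * pd b f x
  rw [Finset.mul_sum]
  refine Finset.sum_congr rfl fun b _ => ?_
  rw [pd_const_mul hf c b]; ring

theorem pd_pdUp_comm {f : (Fin n → ℝ) → ℝ} (ginv : Matrix (Fin n) (Fin n) ℝ)
    (hf : Smooth f) (m a : Fin n) :
    pd m (pdUp ginv a f) = pdUp ginv a (pd m f) := by
  funext x
  show pd m (fun y => ∑ b, ginv a b * pd b f y) x = ∑ b, ginv a b * pd b (pd m f) x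
  rw [pd_sum Finset.univ (fun b => fun y => ginv a b * pd b f y)
    (fun b _ => contDiff_const.mul (pd_smooth hf b)) m]
  refine Finset.sum_congr rfl fun b _ => ?_
  rw [pd_const_mul (pd_smooth hf b) (ginv a b) m]
  show ginv a b * pd m (pd b f) x = _
  rw [pd_comm hf m b]

theorem lap_eq {f : (Fin n → ℝ) → ℝ} (ginv : Matrix (Fin n) (Fin n) ℝ)
    (hf : Smooth f) (x : Fin n → ℝ) :
    lap ginv f x = ∑ a, pd a (pdUp ginv a f) x := by
  refine Finset.sum_congr rfl fun a _ => ?_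
  show ∑ b, ginv a b * pd a (pd b f) x = pd a (fun y => ∑ b, ginv a b * pd b f y) x
  rw [pd_sum Finset.univ (fun b => fun y => ginv a b * pd b f y)
    (fun b _ => contDiff_const.mul (pd_smooth hf b)) a]
  refine Finset.sum_congr rfl fun b _ => ?_
  rw [pd_const_mul (pd_smooth hf b) (ginv a b) a]

theorem pd_lap_comm {f : (Fin n → ℝ) → ℝ} (ginv : Matrix (Fin n) (Fin n) ℝ)
    (hf : Smooth f) (m : Fin n) :
    pd m (lap ginv f) = lap ginv (pd m f) := by
  funext x
  show pd m (fun y => ∑ a, ∑ b, ginv a b * pd a (pd b f) y) x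
      = ∑ a, ∑ b, ginv a b * pd a (pd b (pd m f)) x
  rw [pd_sum Finset.univ (fun a => fun y => ∑ b, ginv a b * pd a (pd b f) y)
    (fun a _ => smooth_sum _ _ fun b _ =>
      contDiff_const.mul (pd_smooth (pd_smooth hf b) a)) m]
  refine Finset.sum_congr rfl fun a _ => ?_
  rw [pd_sum Finset.univ (fun b => fun y => ginv a b * pd a (pd b f) y)
    (fun b _ => contDiff_const.mul (pd_smooth (pd_smooth hf b) a)) m]
  refine Finset.sum_congr rfl fun b _ => ?_
  rw [pd_const_mul (pd_smooth (pd_smooth hf b) a) (ginv a b) m]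
  show ginv a b * pd m (pd a (pd b f)) x = _
  rw [pd_comm (pd_smooth hf b) m a, pd_comm hf m b]

theorem lap_sum {ι : Type*} (ginv : Matrix (Fin n) (Fin n) ℝ) (s : Finset ι)
    (F : ι → (Fin n → ℝ) → ℝ) (hF : ∀ i ∈ s, Smooth (F i)) :
    lap ginv (fun x => ∑ i ∈ s, F i x) = fun x => ∑ i ∈ s, lap ginv (F i) x := by
  funext x
  unfold lap
  rw [Finset.sum_comm (γ := ι)]
  refine Finset.sum_congr rfl fun a _ => ?_
  rw [Finset.sum_comm (γ := ι)]
  refine Finset.sum_congr rfl fun b _ => ?_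
  rw [pd_sum s F hF b, pd_sum s (fun i => pd b (F i)) (fun i hi => pd_smooth (hF i hi) b) a,
    Finset.mul_sum]

theorem lap_const_mul {f : (Fin n → ℝ) → ℝ} (ginv : Matrix (Fin n) (Fin n) ℝ)
    (hf : Smooth f) (c : ℝ) :
    lap ginv (fun x => c * f x) = fun x => c * lap ginv f x := by
  funext x
  unfold lap
  rw [Finset.mul_sum]
  refine Finset.sum_congr rfl fun a _ => ?_
  rw [Finset.mul_sum]
  refine Finset.sum_congr rfl fun b _ => ?_
  rw [pd_const_mul hf c b, pd_const_mul (pd_smooth hf b) c a]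
  ring

theorem lap_zero (ginv : Matrix (Fin n) (Fin n) ℝ) :
    lap ginv (fun _ => (0:ℝ)) = fun _ => 0 := by
  funext x
  simp [lap, pd_zero]

theorem lap_add {f g : (Fin n → ℝ) → ℝ} (ginv : Matrix (Fin n) (Fin n) ℝ)
    (hf : Smooth f) (hg : Smooth g) :
    lap ginv (fun x => f x + g x) = fun x => lap ginv f x + lap ginv g x := by
  funext x
  unfold lap
  rw [← Finset.sum_add_distrib]
  refine Finset.sum_congr rfl fun a _ => ?_
  rw [← Finset.sum_add_distrib]
  refine Finset.sum_congr rfl fun b _ => ?_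
  rw [pd_add hf hg b, pd_add (pd_smooth hf b) (pd_smooth hg b) a]
  ring

theorem swap_sum {α : Type*} [Fintype α] (M : α → α → ℝ) :
    (∑ a, ∑ b, M a b) = ∑ a, ∑ b, M b a := Finset.sum_comm

open Matrix in
theorem ginv_symm {g ginv : Matrix (Fin n) (Fin n) ℝ} (hgsym : g.IsSymm)
    (hginv : g * ginv = 1) : ∀ a b, ginv a b = ginv b a := by
  have h3 : ginvᵀ = ginv := by
    have h4 : ginvᵀ * g = 1 := by
      have : gᵀ = g := hgsym
      calc ginvᵀ * g = ginvᵀ * gᵀ := by rw [this]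
        _ = (g * ginv)ᵀ := by rw [← Matrix.transpose_mul]
        _ = 1 := by rw [hginv, Matrix.transpose_one]
    calc ginvᵀ = ginvᵀ * (g * ginv) := by rw [hginv, Matrix.mul_one]
      _ = (ginvᵀ * g) * ginv := by rw [Matrix.mul_assoc]
      _ = ginv := by rw [h4, Matrix.one_mul]
  intro a b
  have := congrFun (congrFun h3 a) b
  rw [← this]
  rfl

theorem g_contract {g ginv : Matrix (Fin n) (Fin n) ℝ} (hgsym : g.IsSymm)
    (hginv : g * ginv = 1) (f : (Fin n → ℝ) → ℝ) (d : Fin n) (x : Fin n → ℝ) :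
    ∑ a, g a d * pdUp ginv a f x = pd d f x := by
  have key : ∀ e, (∑ a, g a d * ginv a e) = if d = e then 1 else 0 := by
    intro e
    have h1 := congrFun (congrFun hginv d) e
    simp only [Matrix.mul_apply, Matrix.one_apply] at h1
    rw [← h1]
    exact Finset.sum_congr rfl fun a _ => by rw [hgsym.apply d a]
  calc ∑ a, g a d * pdUp ginv a f x
      = ∑ a, ∑ e, (g a d * ginv a e) * pd e f x := by
        refine Finset.sum_congr rfl fun a _ => ?_
        show g a d * ∑ e, ginv a e * pd e f x = _
        rw [Finset.mul_sum]
        exact Finset.sum_congr rfl fun e _ => by ring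
    _ = ∑ e, ∑ a, (g a d * ginv a e) * pd e f x := Finset.sum_comm
    _ = ∑ e, (∑ a, g a d * ginv a e) * pd e f x := by
        refine Finset.sum_congr rfl fun e _ => ?_
        rw [Finset.sum_mul]
    _ = ∑ e, (if d = e then 1 else 0) * pd e f x := by
        refine Finset.sum_congr rfl fun e _ => by rw [key e]
    _ = pd d f x := by simp

theorem lap_pdUp_comm {f : (Fin n → ℝ) → ℝ} (ginv : Matrix (Fin n) (Fin n) ℝ)
    (hf : Smooth f) (a : Fin n) :
    lap ginv (pdUp ginv a f) = pdUp ginv a (lap ginv f) := by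
  have h1 : lap ginv (pdUp ginv a f)
      = fun x => ∑ p, ∑ q, ginv p q * pdUp ginv a (pd p (pd q f)) x := by
    funext x
    unfold lap
    refine Finset.sum_congr rfl fun p _ => Finset.sum_congr rfl fun q _ => ?_
    rw [pd_pdUp_comm ginv hf q, pd_pdUp_comm ginv (pd_smooth hf q) p]
  rw [h1]
  have h2 : pdUp ginv a (lap ginv f)
      = fun x => ∑ p, pdUp ginv a (fun y => ∑ q, ginv p q * pd p (pd q f) y) x := by
    have := pdUp_sum ginv Finset.univ
      (fun p => fun y => ∑ q, ginv p q * pd p (pd q f) y)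
      (fun p _ => smooth_sum _ _ fun q _ =>
        contDiff_const.mul (pd_smooth (pd_smooth hf q) p)) a
    rw [← this]
    rfl
  rw [h2]
  funext x
  refine Finset.sum_congr rfl fun p _ => ?_
  have h3 := pdUp_sum ginv Finset.univ
    (fun q => fun y => ginv p q * pd p (pd q f) y)
    (fun q _ => contDiff_const.mul (pd_smooth (pd_smooth hf q) p)) a
  rw [h3]
  refine Finset.sum_congr rfl fun q _ => ?_
  rw [pdUp_const_mul ginv (pd_smooth (pd_smooth hf q) p) (ginv p q) a]

theorem lap_mul {f g : (Fin n → ℝ) → ℝ} (ginv : Matrix (Fin n) (Fin n) ℝ)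
    (hsym : ∀ a b, ginv a b = ginv b a) (hf : Smooth f) (hg : Smooth g) :
    lap ginv (fun x => f x * g x) = fun x =>
      lap ginv f x * g x + 2 * (∑ m, pdUp ginv m f x * pd m g x) + f x * lap ginv g x := by
  funext x
  have hpd : ∀ a b : Fin n, pd a (pd b (fun y => f y * g y)) x
      = pd a (pd b f) x * g x + pd b f x * pd a g x
        + (pd a f x * pd b g x + f x * pd a (pd b g) x) := by
    intro a b
    rw [pd_mul hf hg b,
      pd_add ((pd_smooth hf b).mul hg) (hf.mul (pd_smooth hg b)) a,
      pd_mul (pd_smooth hf b) hg a, pd_mul hf (pd_smooth hg b) a]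
  have expand : lap ginv (fun y => f y * g y) x
      = ∑ a, ∑ b, ginv a b * (pd a (pd b f) x * g x) +
        (∑ a, ∑ b, ginv a b * (pd b f x * pd a g x) +
         ∑ a, ∑ b, ginv a b * (pd a f x * pd b g x)) +
        ∑ a, ∑ b, ginv a b * (f x * pd a (pd b g) x) := by
    unfold lap
    rw [← Finset.sum_add_distrib, ← Finset.sum_add_distrib, ← Finset.sum_add_distrib]
    refine Finset.sum_congr rfl fun a _ => ?_
    rw [← Finset.sum_add_distrib, ← Finset.sum_add_distrib, ← Finset.sum_add_distrib]
    refine Finset.sum_congr rfl fun b _ => ?_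
    rw [hpd a b]
    ring
  rw [expand]
  have t1 : ∑ a, ∑ b, ginv a b * (pd a (pd b f) x * g x) = lap ginv f x * g x := by
    unfold lap
    rw [Finset.sum_mul]
    refine Finset.sum_congr rfl fun a _ => ?_
    rw [Finset.sum_mul]
    exact Finset.sum_congr rfl fun b _ => by ring
  have t2 : ∑ a, ∑ b, ginv a b * (pd b f x * pd a g x)
      = ∑ m, pdUp ginv m f x * pd m g x := by
    refine Finset.sum_congr rfl fun a _ => ?_
    show _ = (∑ b, ginv a b * pd b f x) * pd a g x
    rw [Finset.sum_mul]
    exact Finset.sum_congr rfl fun b _ => by ring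
  have t3 : ∑ a, ∑ b, ginv a b * (pd a f x * pd b g x)
      = ∑ m, pdUp ginv m f x * pd m g x := by
    rw [swap_sum]
    refine Finset.sum_congr rfl fun a _ => ?_
    show _ = (∑ b, ginv a b * pd b f x) * pd a g x
    rw [Finset.sum_mul]
    refine Finset.sum_congr rfl fun b _ => ?_
    rw [hsym b a]
    ring
  have t4 : ∑ a, ∑ b, ginv a b * (f x * pd a (pd b g) x) = f x * lap ginv g x := by
    unfold lap
    rw [Finset.mul_sum]
    refine Finset.sum_congr rfl fun a _ => ?_
    rw [Finset.mul_sum]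
    exact Finset.sum_congr rfl fun b _ => by ring
  rw [t1, t2, t3, t4]
  ring

theorem pdUp_zero (ginv : Matrix (Fin n) (Fin n) ℝ) (a : Fin n) :
    pdUp ginv a (fun _ => (0:ℝ)) = fun _ => 0 := by
  funext x; simp [pdUp, pd_zero]

theorem pd_add4 {A B C D : (Fin n → ℝ) → ℝ} (hA : Smooth A) (hB : Smooth B)
    (hC : Smooth C) (hD : Smooth D) (m : Fin n) :
    pd m (fun x => A x + B x + C x + D x)
      = fun x => pd m A x + pd m B x + pd m C x + pd m D x := by
  funext x
  have dA := (smooth_diff hA).differentiableAt (x := x)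
  have dB := (smooth_diff hB).differentiableAt (x := x)
  have dC := (smooth_diff hC).differentiableAt (x := x)
  have dD := (smooth_diff hD).differentiableAt (x := x)
  show fderiv ℝ (fun x => A x + B x + C x + D x) x (Pi.single m 1) = _
  rw [fderiv_fun_add (f := fun x => A x + B x + C x) ((dA.add dB).add dC) dD,
    fderiv_fun_add (f := fun x => A x + B x) (dA.add dB) dC, fderiv_fun_add dA dB]
  rfl

/-- `T^{bc} = ∂_r k^{rbc}` -/
def Tt {n : ℕ} (k : Fin n → Fin n → Fin n → (Fin n → ℝ) → ℝ) (b c : Fin n) :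
    (Fin n → ℝ) → ℝ := fun x => ∑ r, pd r (k r b c) x

/-- `S^c = ∂_b T^{bc}` -/
def Ss {n : ℕ} (k : Fin n → Fin n → Fin n → (Fin n → ℝ) → ℝ) (c : Fin n) :
    (Fin n → ℝ) → ℝ := fun x => ∑ d, pd d (Tt k d c) x

/-- `τ^c = g_{pq} k^{pqc}` -/
def tauF {n : ℕ} (g : Matrix (Fin n) (Fin n) ℝ)
    (k : Fin n → Fin n → Fin n → (Fin n → ℝ) → ℝ) (c : Fin n) :
    (Fin n → ℝ) → ℝ := fun x => ∑ p, ∑ q, g p q * k p q c x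

section Killing
variable {g ginv : Matrix (Fin n) (Fin n) ℝ}
  {k : Fin n → Fin n → Fin n → (Fin n → ℝ) → ℝ}
  (hsmooth : ∀ a b c, ContDiff ℝ (⊤ : ℕ∞) (k a b c))

include hsmooth

theorem Tt_smooth (b c : Fin n) : Smooth (Tt k b c) :=
  smooth_sum _ _ fun r _ => pd_smooth (hsmooth r b c) r

theorem Ss_smooth (c : Fin n) : Smooth (Ss k c) :=
  smooth_sum _ _ fun d _ => pd_smooth (Tt_smooth hsmooth d c) d

theorem tau_smooth (c : Fin n) : Smooth (tauF g k c) :=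
  smooth_sum _ _ fun p _ => smooth_sum _ _ fun q _ =>
    contDiff_const.mul (hsmooth p q c)

theorem Tt_symm (ksym12 : ∀ a b c : Fin n, k a c b = k a b c) (b c : Fin n) :
    Tt k b c = Tt k c b := by
  funext x
  exact Finset.sum_congr rfl fun r _ => by rw [ksym12 r c b]

/-- `S^c` agrees with the expression in the statement. -/
theorem Ss_stmt (c : Fin n) :
    Ss k c = fun x => ∑ r, ∑ s, pd r (pd s (k r s c)) x := by
  funext x
  have h1 : ∀ d : Fin n, pd d (Tt k d c) x = ∑ r, pd d (pd r (k r d c)) x := by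
    intro d
    show pd d (fun y => ∑ r, pd r (k r d c) y) x = _
    rw [pd_sum Finset.univ (fun r => pd r (k r d c))
      (fun r _ => pd_smooth (hsmooth r d c) r) d]
  calc (∑ d, pd d (Tt k d c) x) = ∑ d, ∑ r, pd d (pd r (k r d c)) x :=
        Finset.sum_congr rfl fun d _ => h1 d
    _ = ∑ d, ∑ r, pd r (pd d (k d r c)) x := swap_sum _
    _ = ∑ r, ∑ s, pd r (pd s (k r s c)) x :=
        Finset.sum_congr rfl fun r _ => Finset.sum_congr rfl fun s _ => by
          rw [pd_comm (hsmooth r s c) s r]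

set_option linter.unusedSectionVars false

/-- `Δk^{bcd} + ∂^b T^{cd} + ∂^c T^{bd} + ∂^d T^{bc} = 0` -/
theorem killing_d1
    (hkill : ∀ (a b c d : Fin n) (x : Fin n → ℝ),
      pdUp ginv a (k b c d) x + pdUp ginv b (k a c d) x +
        pdUp ginv c (k a b d) x + pdUp ginv d (k a b c) x = 0)
    (b c d : Fin n) (x : Fin n → ℝ) :
    lap ginv (k b c d) x + pdUp ginv b (Tt k c d) x
      + pdUp ginv c (Tt k b d) x + pdUp ginv d (Tt k b c) x = 0 := by
  have step : ∀ (a : Fin n),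
      pd a (pdUp ginv a (k b c d)) x + pd a (pdUp ginv b (k a c d)) x
        + pd a (pdUp ginv c (k a b d)) x + pd a (pdUp ginv d (k a b c)) x = 0 := by
    intro a
    have h0 : (fun y => pdUp ginv a (k b c d) y + pdUp ginv b (k a c d) y
        + pdUp ginv c (k a b d) y + pdUp ginv d (k a b c) y) = (fun _ => 0) :=
      funext fun y => hkill a b c d y
    have h1 := pd_add4 (pdUp_smooth ginv (hsmooth b c d) a)
      (pdUp_smooth ginv (hsmooth a c d) b) (pdUp_smooth ginv (hsmooth a b d) c)
      (pdUp_smooth ginv (hsmooth a b c) d) a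
    rw [h0, pd_zero] at h1
    exact (congrFun h1 x).symm
  have sum0 : ∑ a, (pd a (pdUp ginv a (k b c d)) x + pd a (pdUp ginv b (k a c d)) x
      + pd a (pdUp ginv c (k a b d)) x + pd a (pdUp ginv d (k a b c)) x) = 0 :=
    Finset.sum_eq_zero fun a _ => step a
  rw [Finset.sum_add_distrib, Finset.sum_add_distrib, Finset.sum_add_distrib] at sum0
  have p1 : ∑ a, pd a (pdUp ginv a (k b c d)) x = lap ginv (k b c d) x :=
    (lap_eq ginv (hsmooth b c d) x).symm
  have p2 : ∀ (e : Fin n) (kk : Fin n → (Fin n → ℝ) → ℝ)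
      (hkk : ∀ a, Smooth (kk a)),
      ∑ a, pd a (pdUp ginv e (kk a)) x
        = pdUp ginv e (fun y => ∑ a, pd a (kk a) y) x := by
    intro e kk hkk
    calc ∑ a, pd a (pdUp ginv e (kk a)) x
        = ∑ a, pdUp ginv e (pd a (kk a)) x :=
          Finset.sum_congr rfl fun a _ => by rw [pd_pdUp_comm ginv (hkk a) a e]
      _ = pdUp ginv e (fun y => ∑ a, pd a (kk a) y) x :=
          (congrFun (pdUp_sum ginv Finset.univ (fun a => pd a (kk a))
            (fun a _ => pd_smooth (hkk a) a) e) x).symm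
  have p2' := p2 b (fun a => k a c d) (fun a => hsmooth a c d)
  have p3' := p2 c (fun a => k a b d) (fun a => hsmooth a b d)
  have p4' := p2 d (fun a => k a b c) (fun a => hsmooth a b c)
  rw [p1, p2', p3', p4'] at sum0
  exact sum0

/-- contraction helper: `∑_{p q} g_{pq} ∂^p u_q = ∑_q ∂_q u_q` -/
theorem gg_contract (hgsym : g.IsSymm) (hginv : g * ginv = 1)
    (u : Fin n → (Fin n → ℝ) → ℝ) (x : Fin n → ℝ) :
    ∑ p, ∑ q, g p q * pdUp ginv p (u q) x = ∑ q, pd q (u q) x := by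
  rw [swap_sum]
  exact Finset.sum_congr rfl fun q _ => g_contract hgsym hginv (u q) q x

/-- contraction helper on the second index: `∑_{p q} g_{pq} ∂^q u_p = ∑_p ∂_p u_p` -/
theorem gg_contract' (hgsym : g.IsSymm) (hginv : g * ginv = 1)
    (u : Fin n → (Fin n → ℝ) → ℝ) (x : Fin n → ℝ) :
    ∑ p, ∑ q, g p q * pdUp ginv q (u p) x = ∑ p, pd p (u p) x := by
  refine Finset.sum_congr rfl fun p _ => ?_
  calc ∑ q, g p q * pdUp ginv q (u p) x
      = ∑ q, g q p * pdUp ginv q (u p) x :=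
        Finset.sum_congr rfl fun q _ => by rw [hgsym.apply p q]
    _ = pd p (u p) x := g_contract hgsym hginv (u p) p x

/-- `2 T^{cd} + ∂^c τ^d + ∂^d τ^c = 0` -/
theorem killing_tr (hgsym : g.IsSymm) (hginv : g * ginv = 1)
    (hkill : ∀ (a b c d : Fin n) (x : Fin n → ℝ),
      pdUp ginv a (k b c d) x + pdUp ginv b (k a c d) x +
        pdUp ginv c (k a b d) x + pdUp ginv d (k a b c) x = 0)
    (c d : Fin n) (x : Fin n → ℝ) :
    Tt k c d x + Tt k c d x + pdUp ginv c (tauF g k d) x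
      + pdUp ginv d (tauF g k c) x = 0 := by
  have sum0 : ∑ p, ∑ q, g p q * (pdUp ginv p (k q c d) x + pdUp ginv q (k p c d) x
      + pdUp ginv c (k p q d) x + pdUp ginv d (k p q c) x) = 0 :=
    Finset.sum_eq_zero fun p _ => Finset.sum_eq_zero fun q _ => by
      rw [hkill p q c d x, mul_zero]
  have expand : ∑ p, ∑ q, g p q * (pdUp ginv p (k q c d) x + pdUp ginv q (k p c d) x
      + pdUp ginv c (k p q d) x + pdUp ginv d (k p q c) x)
      = (∑ p, ∑ q, g p q * pdUp ginv p (k q c d) x)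
      + (∑ p, ∑ q, g p q * pdUp ginv q (k p c d) x)
      + (∑ p, ∑ q, g p q * pdUp ginv c (k p q d) x)
      + (∑ p, ∑ q, g p q * pdUp ginv d (k p q c) x) := by
    rw [← Finset.sum_add_distrib, ← Finset.sum_add_distrib, ← Finset.sum_add_distrib]
    refine Finset.sum_congr rfl fun p _ => ?_
    rw [← Finset.sum_add_distrib, ← Finset.sum_add_distrib, ← Finset.sum_add_distrib]
    exact Finset.sum_congr rfl fun q _ => by ring
  rw [expand] at sum0
  have q1 : ∑ p, ∑ q, g p q * pdUp ginv p (k q c d) x = Tt k c d x :=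
    gg_contract hsmooth hgsym hginv (fun q => k q c d) x
  have q2 : ∑ p, ∑ q, g p q * pdUp ginv q (k p c d) x = Tt k c d x :=
    gg_contract' hsmooth hgsym hginv (fun p => k p c d) x
  have q34 : ∀ e ee : Fin n,
      ∑ p, ∑ q, g p q * pdUp ginv e (k p q ee) x = pdUp ginv e (tauF g k ee) x := by
    intro e ee
    have h1 := pdUp_sum ginv Finset.univ (fun p => fun y => ∑ q, g p q * k p q ee y)
      (fun p _ => smooth_sum _ _ fun q _ => contDiff_const.mul (hsmooth p q ee)) e
    have h2 : ∀ p : Fin n, pdUp ginv e (fun y => ∑ q, g p q * k p q ee y) x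
        = ∑ q, g p q * pdUp ginv e (k p q ee) x := by
      intro p
      rw [pdUp_sum ginv Finset.univ (fun q => fun y => g p q * k p q ee y)
        (fun q _ => contDiff_const.mul (hsmooth p q ee)) e]
      exact Finset.sum_congr rfl fun q _ => by
        rw [pdUp_const_mul ginv (hsmooth p q ee) (g p q) e]
    calc ∑ p, ∑ q, g p q * pdUp ginv e (k p q ee) x
        = ∑ p, pdUp ginv e (fun y => ∑ q, g p q * k p q ee y) x :=
          Finset.sum_congr rfl fun p _ => (h2 p).symm
      _ = pdUp ginv e (tauF g k ee) x := (congrFun h1 x).symm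
  rw [q1, q2, q34 c d, q34 d c] at sum0
  exact sum0

omit hsmooth in
theorem rot3 {M : Fin n → Fin n → Fin n → ℝ} :
    (∑ a, ∑ b, ∑ c, M a b c) = ∑ a, ∑ b, ∑ c, M b c a := by
  calc (∑ a, ∑ b, ∑ c, M a b c)
      = ∑ a, ∑ c, ∑ b, M a b c := Finset.sum_congr rfl fun _ _ => Finset.sum_comm
    _ = ∑ c, ∑ a, ∑ b, M a b c := Finset.sum_comm

/-- the trace `g_{cd} T^{cd}` vanishes -/
theorem trT_zero (hgsym : g.IsSymm) (hginv : g * ginv = 1)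
    (kcyc : ∀ a b c : Fin n, k b c a = k a b c)
    (hkill : ∀ (a b c d : Fin n) (x : Fin n → ℝ),
      pdUp ginv a (k b c d) x + pdUp ginv b (k a c d) x +
        pdUp ginv c (k a b d) x + pdUp ginv d (k a b c) x = 0) :
    (fun x => ∑ c, ∑ d, g c d * Tt k c d x) = fun _ => 0 := by
  funext x
  have sum0 : ∑ c, ∑ d, g c d * (Tt k c d x + Tt k c d x
      + pdUp ginv c (tauF g k d) x + pdUp ginv d (tauF g k c) x) = 0 :=
    Finset.sum_eq_zero fun c _ => Finset.sum_eq_zero fun d _ => by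
      rw [killing_tr hsmooth hgsym hginv hkill c d x, mul_zero]
  have expand : ∑ c, ∑ d, g c d * (Tt k c d x + Tt k c d x
      + pdUp ginv c (tauF g k d) x + pdUp ginv d (tauF g k c) x)
      = (∑ c, ∑ d, g c d * Tt k c d x) + (∑ c, ∑ d, g c d * Tt k c d x)
      + (∑ c, ∑ d, g c d * pdUp ginv c (tauF g k d) x)
      + (∑ c, ∑ d, g c d * pdUp ginv d (tauF g k c) x) := by
    rw [← Finset.sum_add_distrib, ← Finset.sum_add_distrib, ← Finset.sum_add_distrib]
    refine Finset.sum_congr rfl fun c _ => ?_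
    rw [← Finset.sum_add_distrib, ← Finset.sum_add_distrib, ← Finset.sum_add_distrib]
    exact Finset.sum_congr rfl fun d _ => by ring
  rw [expand] at sum0
  have r3 : ∑ c, ∑ d, g c d * pdUp ginv c (tauF g k d) x = ∑ d, pd d (tauF g k d) x :=
    gg_contract hsmooth hgsym hginv (fun d => tauF g k d) x
  have r4 : ∑ c, ∑ d, g c d * pdUp ginv d (tauF g k c) x = ∑ c, pd c (tauF g k c) x :=
    gg_contract' hsmooth hgsym hginv (fun c => tauF g k c) x
  -- G = P : ∑_{cd} g_{cd} T^{cd} = ∑_d ∂_d τ^d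
  have GP : ∑ c, ∑ d, g c d * Tt k c d x = ∑ d, pd d (tauF g k d) x := by
    have hG : ∑ c, ∑ d, g c d * Tt k c d x
        = ∑ c, ∑ d, ∑ r, g c d * pd r (k r c d) x := by
      refine Finset.sum_congr rfl fun c _ => Finset.sum_congr rfl fun d _ => ?_
      show g c d * ∑ r, pd r (k r c d) x = _
      rw [Finset.mul_sum]
    have hP : ∑ d, pd d (tauF g k d) x
        = ∑ d, ∑ p, ∑ q, g p q * pd d (k p q d) x := by
      refine Finset.sum_congr rfl fun d _ => ?_
      show pd d (fun y => ∑ p, ∑ q, g p q * k p q d y) x = _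
      rw [pd_sum Finset.univ (fun p => fun y => ∑ q, g p q * k p q d y)
        (fun p _ => smooth_sum _ _ fun q _ => contDiff_const.mul (hsmooth p q d)) d]
      refine Finset.sum_congr rfl fun p _ => ?_
      rw [pd_sum Finset.univ (fun q => fun y => g p q * k p q d y)
        (fun q _ => contDiff_const.mul (hsmooth p q d)) d]
      exact Finset.sum_congr rfl fun q _ => by
        rw [pd_const_mul (hsmooth p q d) (g p q) d]
    rw [hG, hP, rot3 (M := fun c d r => g c d * pd r (k r c d) x)]
    refine Finset.sum_congr rfl fun a _ => Finset.sum_congr rfl fun b _ =>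
      Finset.sum_congr rfl fun c _ => ?_
    rw [kcyc a b c]
  rw [r3, r4, GP] at sum0
  linarith [sum0]

theorem contract_pdUp (e : Fin n) (kk : Fin n → (Fin n → ℝ) → ℝ)
    (hkk : ∀ a, Smooth (kk a)) (x : Fin n → ℝ) :
    ∑ a, pd a (pdUp ginv e (kk a)) x = pdUp ginv e (fun y => ∑ a, pd a (kk a) y) x := by
  calc ∑ a, pd a (pdUp ginv e (kk a)) x
      = ∑ a, pdUp ginv e (pd a (kk a)) x :=
        Finset.sum_congr rfl fun a _ => by rw [pd_pdUp_comm ginv (hkk a) a e]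
    _ = pdUp ginv e (fun y => ∑ a, pd a (kk a) y) x :=
        (congrFun (pdUp_sum ginv Finset.univ (fun a => pd a (kk a))
          (fun a _ => pd_smooth (hkk a) a) e) x).symm

theorem lap_add4 {A B C D : (Fin n → ℝ) → ℝ} (hA : Smooth A) (hB : Smooth B)
    (hC : Smooth C) (hD : Smooth D) :
    lap ginv (fun x => A x + B x + C x + D x)
      = fun x => lap ginv A x + lap ginv B x + lap ginv C x + lap ginv D x := by
  funext x
  unfold lap
  rw [← Finset.sum_add_distrib, ← Finset.sum_add_distrib, ← Finset.sum_add_distrib]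
  refine Finset.sum_congr rfl fun a _ => ?_
  rw [← Finset.sum_add_distrib, ← Finset.sum_add_distrib, ← Finset.sum_add_distrib]
  refine Finset.sum_congr rfl fun b _ => ?_
  rw [pd_add4 hA hB hC hD b,
    pd_add4 (pd_smooth hA b) (pd_smooth hB b) (pd_smooth hC b) (pd_smooth hD b) a]
  ring

/-- `2 Δ T^{cd} + ∂^c S^d + ∂^d S^c = 0` -/
theorem killing_d2
    (hkill : ∀ (a b c d : Fin n) (x : Fin n → ℝ),
      pdUp ginv a (k b c d) x + pdUp ginv b (k a c d) x +
        pdUp ginv c (k a b d) x + pdUp ginv d (k a b c) x = 0)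
    (c d : Fin n) (x : Fin n → ℝ) :
    lap ginv (Tt k c d) x + lap ginv (Tt k c d) x
      + pdUp ginv c (Ss k d) x + pdUp ginv d (Ss k c) x = 0 := by
  have step : ∀ (b : Fin n),
      pd b (lap ginv (k b c d)) x + pd b (pdUp ginv b (Tt k c d)) x
        + pd b (pdUp ginv c (Tt k b d)) x + pd b (pdUp ginv d (Tt k b c)) x = 0 := by
    intro b
    have h0 : (fun y => lap ginv (k b c d) y + pdUp ginv b (Tt k c d) y
        + pdUp ginv c (Tt k b d) y + pdUp ginv d (Tt k b c) y) = (fun _ => 0) :=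
      funext fun y => killing_d1 hsmooth hkill b c d y
    have h1 := pd_add4 (lap_smooth ginv (hsmooth b c d))
      (pdUp_smooth ginv (Tt_smooth hsmooth c d) b)
      (pdUp_smooth ginv (Tt_smooth hsmooth b d) c)
      (pdUp_smooth ginv (Tt_smooth hsmooth b c) d) b
    rw [h0, pd_zero] at h1
    exact (congrFun h1 x).symm
  have sum0 : ∑ b, (pd b (lap ginv (k b c d)) x + pd b (pdUp ginv b (Tt k c d)) x
      + pd b (pdUp ginv c (Tt k b d)) x + pd b (pdUp ginv d (Tt k b c)) x) = 0 :=
    Finset.sum_eq_zero fun b _ => step b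
  rw [Finset.sum_add_distrib, Finset.sum_add_distrib, Finset.sum_add_distrib] at sum0
  have p1 : ∑ b, pd b (lap ginv (k b c d)) x = lap ginv (Tt k c d) x := by
    calc ∑ b, pd b (lap ginv (k b c d)) x
        = ∑ b, lap ginv (pd b (k b c d)) x :=
          Finset.sum_congr rfl fun b _ => by rw [pd_lap_comm ginv (hsmooth b c d) b]
      _ = lap ginv (fun y => ∑ b, pd b (k b c d) y) x :=
          (congrFun (lap_sum ginv Finset.univ (fun b => pd b (k b c d))
            (fun b _ => pd_smooth (hsmooth b c d) b)) x).symm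
      _ = lap ginv (Tt k c d) x := rfl
  have p2 : ∑ b, pd b (pdUp ginv b (Tt k c d)) x = lap ginv (Tt k c d) x :=
    (lap_eq ginv (Tt_smooth hsmooth c d) x).symm
  have p3 : ∑ b, pd b (pdUp ginv c (Tt k b d)) x = pdUp ginv c (Ss k d) x :=
    contract_pdUp hsmooth c (fun b => Tt k b d) (fun b => Tt_smooth hsmooth b d) x
  have p4 : ∑ b, pd b (pdUp ginv d (Tt k b c)) x = pdUp ginv d (Ss k c) x :=
    contract_pdUp hsmooth d (fun b => Tt k b c) (fun b => Tt_smooth hsmooth b c) x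
  rw [p1, p2, p3, p4] at sum0
  exact sum0

/-- `Δ τ^b + 2 S^b = 0` -/
theorem lap_tau (hgsym : g.IsSymm) (hginv : g * ginv = 1)
    (ksym12 : ∀ a b c : Fin n, k a c b = k a b c)
    (kcyc : ∀ a b c : Fin n, k b c a = k a b c)
    (hkill : ∀ (a b c d : Fin n) (x : Fin n → ℝ),
      pdUp ginv a (k b c d) x + pdUp ginv b (k a c d) x +
        pdUp ginv c (k a b d) x + pdUp ginv d (k a b c) x = 0)
    (b : Fin n) (x : Fin n → ℝ) :
    lap ginv (tauF g k b) x + Ss k b x + Ss k b x = 0 := by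
  have sum0 : ∑ c, ∑ d, g c d * (lap ginv (k b c d) x + pdUp ginv b (Tt k c d) x
      + pdUp ginv c (Tt k b d) x + pdUp ginv d (Tt k b c) x) = 0 :=
    Finset.sum_eq_zero fun c _ => Finset.sum_eq_zero fun d _ => by
      rw [killing_d1 hsmooth hkill b c d x, mul_zero]
  have expand : ∑ c, ∑ d, g c d * (lap ginv (k b c d) x + pdUp ginv b (Tt k c d) x
      + pdUp ginv c (Tt k b d) x + pdUp ginv d (Tt k b c) x)
      = (∑ c, ∑ d, g c d * lap ginv (k b c d) x)
      + (∑ c, ∑ d, g c d * pdUp ginv b (Tt k c d) x)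
      + (∑ c, ∑ d, g c d * pdUp ginv c (Tt k b d) x)
      + (∑ c, ∑ d, g c d * pdUp ginv d (Tt k b c) x) := by
    rw [← Finset.sum_add_distrib, ← Finset.sum_add_distrib, ← Finset.sum_add_distrib]
    refine Finset.sum_congr rfl fun c _ => ?_
    rw [← Finset.sum_add_distrib, ← Finset.sum_add_distrib, ← Finset.sum_add_distrib]
    exact Finset.sum_congr rfl fun d _ => by ring
  rw [expand] at sum0
  have u1 : ∑ c, ∑ d, g c d * lap ginv (k b c d) x = lap ginv (tauF g k b) x := by
    have h1 : lap ginv (tauF g k b)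
        = fun x => ∑ p, lap ginv (fun y => ∑ q, g p q * k p q b y) x :=
      lap_sum ginv Finset.univ (fun p => fun y => ∑ q, g p q * k p q b y)
        (fun p _ => smooth_sum _ _ fun q _ => contDiff_const.mul (hsmooth p q b))
    have h2 : ∀ p : Fin n, lap ginv (fun y => ∑ q, g p q * k p q b y) x
        = ∑ q, g p q * lap ginv (k p q b) x := by
      intro p
      rw [lap_sum ginv Finset.univ (fun q => fun y => g p q * k p q b y)
        (fun q _ => contDiff_const.mul (hsmooth p q b))]
      exact Finset.sum_congr rfl fun q _ => by
        rw [lap_const_mul ginv (hsmooth p q b) (g p q)]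
    rw [h1]
    calc ∑ c, ∑ d, g c d * lap ginv (k b c d) x
        = ∑ c, ∑ d, g c d * lap ginv (k c d b) x := by
          refine Finset.sum_congr rfl fun c _ => Finset.sum_congr rfl fun d _ => ?_
          rw [kcyc b c d]
      _ = ∑ p, lap ginv (fun y => ∑ q, g p q * k p q b y) x :=
          Finset.sum_congr rfl fun p _ => (h2 p).symm
  have u2 : ∑ c, ∑ d, g c d * pdUp ginv b (Tt k c d) x = 0 := by
    have h2 : ∀ c : Fin n, pdUp ginv b (fun y => ∑ d, g c d * Tt k c d y) x
        = ∑ d, g c d * pdUp ginv b (Tt k c d) x := by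
      intro c
      rw [pdUp_sum ginv Finset.univ (fun d => fun y => g c d * Tt k c d y)
        (fun d _ => contDiff_const.mul (Tt_smooth hsmooth c d)) b]
      exact Finset.sum_congr rfl fun d _ => by
        rw [pdUp_const_mul ginv (Tt_smooth hsmooth c d) (g c d) b]
    have h1 := pdUp_sum ginv Finset.univ (fun c => fun y => ∑ d, g c d * Tt k c d y)
      (fun c _ => smooth_sum _ _ fun d _ =>
        contDiff_const.mul (Tt_smooth hsmooth c d)) b
    calc ∑ c, ∑ d, g c d * pdUp ginv b (Tt k c d) x
        = ∑ c, pdUp ginv b (fun y => ∑ d, g c d * Tt k c d y) x :=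
          Finset.sum_congr rfl fun c _ => (h2 c).symm
      _ = pdUp ginv b (fun y => ∑ c, ∑ d, g c d * Tt k c d y) x := (congrFun h1 x).symm
      _ = pdUp ginv b (fun _ => 0) x := by
          rw [trT_zero hsmooth hgsym hginv kcyc hkill]
      _ = 0 := congrFun (pdUp_zero ginv b) x
  have u3 : ∑ c, ∑ d, g c d * pdUp ginv c (Tt k b d) x = Ss k b x := by
    calc ∑ c, ∑ d, g c d * pdUp ginv c (Tt k b d) x
        = ∑ d, pd d (Tt k b d) x := gg_contract hsmooth hgsym hginv (fun d => Tt k b d) x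
      _ = ∑ d, pd d (Tt k d b) x := Finset.sum_congr rfl fun d _ => by
          rw [Tt_symm hsmooth ksym12 b d]
      _ = Ss k b x := rfl
  have u4 : ∑ c, ∑ d, g c d * pdUp ginv d (Tt k b c) x = Ss k b x := by
    calc ∑ c, ∑ d, g c d * pdUp ginv d (Tt k b c) x
        = ∑ c, pd c (Tt k b c) x := gg_contract' hsmooth hgsym hginv (fun c => Tt k b c) x
      _ = ∑ c, pd c (Tt k c b) x := Finset.sum_congr rfl fun c _ => by
          rw [Tt_symm hsmooth ksym12 b c]
      _ = Ss k b x := rfl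
  rw [u1, u2, u3, u4] at sum0
  linarith

/-- `Δ T^{cd} = 0` and `∂^c S^d + ∂^d S^c = 0` -/
theorem lapT_dS (hgsym : g.IsSymm) (hginv : g * ginv = 1)
    (ksym12 : ∀ a b c : Fin n, k a c b = k a b c)
    (kcyc : ∀ a b c : Fin n, k b c a = k a b c)
    (hkill : ∀ (a b c d : Fin n) (x : Fin n → ℝ),
      pdUp ginv a (k b c d) x + pdUp ginv b (k a c d) x +
        pdUp ginv c (k a b d) x + pdUp ginv d (k a b c) x = 0)
    (c d : Fin n) (x : Fin n → ℝ) :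
    lap ginv (Tt k c d) x = 0
      ∧ pdUp ginv c (Ss k d) x + pdUp ginv d (Ss k c) x = 0 := by
  have hF0 : (fun y => Tt k c d y + Tt k c d y + pdUp ginv c (tauF g k d) y
      + pdUp ginv d (tauF g k c) y) = (fun _ => 0) :=
    funext fun y => killing_tr hsmooth hgsym hginv hkill c d y
  have h1 := lap_add4 hsmooth (ginv := ginv) (Tt_smooth hsmooth c d) (Tt_smooth hsmooth c d)
    (pdUp_smooth ginv (tau_smooth (g := g) hsmooth d) c) (pdUp_smooth ginv (tau_smooth (g := g) hsmooth c) d)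
  rw [hF0, lap_zero] at h1
  have h2 := congrFun h1.symm x
  -- h2 : lap T + lap T + lap (∂^c τ^d) + lap (∂^d τ^c) = 0
  have ltau : ∀ e : Fin n, lap ginv (tauF g k e) = fun y => (-2) * Ss k e y := by
    intro e
    funext y
    have := lap_tau hsmooth hgsym hginv ksym12 kcyc hkill e y
    linarith
  have h3 : ∀ e e' : Fin n, lap ginv (pdUp ginv e (tauF g k e')) x
      = (-2) * pdUp ginv e (Ss k e') x := by
    intro e e'
    rw [lap_pdUp_comm ginv (tau_smooth hsmooth e') e, ltau e',
      pdUp_const_mul ginv (Ss_smooth hsmooth e') (-2) e]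
  rw [h3 c d, h3 d c] at h2
  have h4 := killing_d2 hsmooth hkill c d x
  constructor <;> linarith

/-- `Δ S^c = 0` -/
theorem lapS_zero (hgsym : g.IsSymm) (hginv : g * ginv = 1)
    (ksym12 : ∀ a b c : Fin n, k a c b = k a b c)
    (kcyc : ∀ a b c : Fin n, k b c a = k a b c)
    (hkill : ∀ (a b c d : Fin n) (x : Fin n → ℝ),
      pdUp ginv a (k b c d) x + pdUp ginv b (k a c d) x +
        pdUp ginv c (k a b d) x + pdUp ginv d (k a b c) x = 0)
    (c : Fin n) (x : Fin n → ℝ) :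
    lap ginv (Ss k c) x = 0 := by
  have h1 : lap ginv (Ss k c) x = ∑ d, lap ginv (pd d (Tt k d c)) x :=
    congrFun (lap_sum ginv Finset.univ (fun d => pd d (Tt k d c))
      (fun d _ => pd_smooth (Tt_smooth hsmooth d c) d)) x
  rw [h1]
  refine Finset.sum_eq_zero fun d _ => ?_
  rw [← pd_lap_comm ginv (Tt_smooth hsmooth d c) d]
  have h2 : lap ginv (Tt k d c) = fun _ => 0 :=
    funext fun y => (lapT_dS hsmooth hgsym hginv ksym12 kcyc hkill d c y).1
  rw [h2, pd_zero]

end Killing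

theorem pd_comb {A B C : (Fin n → ℝ) → ℝ} (hA : Smooth A) (hB : Smooth B)
    (hC : Smooth C) (p q : ℝ) (m : Fin n) :
    pd m (fun x => A x + p * B x + q * C x)
      = fun x => pd m A x + p * pd m B x + q * pd m C x := by
  funext x
  have dA := (smooth_diff hA).differentiableAt (x := x)
  have dB := ((smooth_diff hB).const_mul p).differentiableAt (x := x)
  have dC := ((smooth_diff hC).const_mul q).differentiableAt (x := x)
  show fderiv ℝ (fun x => A x + p * B x + q * C x) x (Pi.single m 1) = _
  rw [fderiv_fun_add (f := fun x => A x + p * B x) (dA.add dB) dC, fderiv_fun_add dA dB,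
    fderiv_const_mul (smooth_diff hB).differentiableAt p,
    fderiv_const_mul (smooth_diff hC).differentiableAt q]
  rfl

theorem lap_comb {A B C : (Fin n → ℝ) → ℝ} (ginv : Matrix (Fin n) (Fin n) ℝ)
    (hA : Smooth A) (hB : Smooth B) (hC : Smooth C) (p q : ℝ) :
    lap ginv (fun x => A x + p * B x + q * C x)
      = fun x => lap ginv A x + p * lap ginv B x + q * lap ginv C x := by
  funext x
  unfold lap
  simp only [Finset.mul_sum]
  rw [← Finset.sum_add_distrib, ← Finset.sum_add_distrib]
  refine Finset.sum_congr rfl fun a _ => ?_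
  rw [← Finset.sum_add_distrib, ← Finset.sum_add_distrib]
  refine Finset.sum_congr rfl fun b _ => ?_
  rw [pd_comb hA hB hC p q b, pd_comb (pd_smooth hA b) (pd_smooth hB b)
    (pd_smooth hC b) p q a]
  ring

theorem rot4 {M : Fin n → Fin n → Fin n → Fin n → ℝ} :
    (∑ a, ∑ b, ∑ c, ∑ d, M a b c d) = ∑ a, ∑ b, ∑ c, ∑ d, M b c d a := by
  calc (∑ a, ∑ b, ∑ c, ∑ d, M a b c d)
      = ∑ a, ∑ b, ∑ d, ∑ c, M a b c d :=
        Finset.sum_congr rfl fun a _ => Finset.sum_congr rfl fun b _ => Finset.sum_comm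
    _ = ∑ a, ∑ d, ∑ b, ∑ c, M a b c d :=
        Finset.sum_congr rfl fun a _ => Finset.sum_comm
    _ = ∑ d, ∑ a, ∑ b, ∑ c, M a b c d := Finset.sum_comm

theorem sum4_swap12 {M : Fin n → Fin n → Fin n → Fin n → ℝ} :
    (∑ a, ∑ b, ∑ c, ∑ d, M a b c d) = ∑ a, ∑ b, ∑ c, ∑ d, M b a c d :=
  Finset.sum_comm

theorem sum4_swap23 {M : Fin n → Fin n → Fin n → Fin n → ℝ} :
    (∑ a, ∑ b, ∑ c, ∑ d, M a b c d) = ∑ a, ∑ b, ∑ c, ∑ d, M a c b d :=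
  Finset.sum_congr rfl fun a _ => Finset.sum_comm

theorem sum4_swap34 {M : Fin n → Fin n → Fin n → Fin n → ℝ} :
    (∑ a, ∑ b, ∑ c, ∑ d, M a b c d) = ∑ a, ∑ b, ∑ c, ∑ d, M a b d c :=
  Finset.sum_congr rfl fun a _ => Finset.sum_congr rfl fun b _ => Finset.sum_comm

theorem sum4_swap13 {M : Fin n → Fin n → Fin n → Fin n → ℝ} :
    (∑ a, ∑ b, ∑ c, ∑ d, M a b c d) = ∑ a, ∑ b, ∑ c, ∑ d, M c b a d := by
  calc (∑ a, ∑ b, ∑ c, ∑ d, M a b c d)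
      = ∑ a, ∑ b, ∑ c, ∑ d, M a c b d := sum4_swap23
    _ = ∑ a, ∑ b, ∑ c, ∑ d, M b c a d := sum4_swap12
    _ = ∑ a, ∑ b, ∑ c, ∑ d, M c b a d := sum4_swap23

theorem sum4_swap14 {M : Fin n → Fin n → Fin n → Fin n → ℝ} :
    (∑ a, ∑ b, ∑ c, ∑ d, M a b c d) = ∑ a, ∑ b, ∑ c, ∑ d, M d b c a := by
  calc (∑ a, ∑ b, ∑ c, ∑ d, M a b c d)
      = ∑ a, ∑ b, ∑ c, ∑ d, M b a c d := sum4_swap12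
    _ = ∑ a, ∑ b, ∑ c, ∑ d, M c a b d := sum4_swap23
    _ = ∑ a, ∑ b, ∑ c, ∑ d, M d a b c := sum4_swap34
    _ = ∑ a, ∑ b, ∑ c, ∑ d, M d a c b := sum4_swap23
    _ = ∑ a, ∑ b, ∑ c, ∑ d, M d b c a := sum4_swap12

theorem sum3_swap12 {M : Fin n → Fin n → Fin n → ℝ} :
    (∑ a, ∑ b, ∑ c, M a b c) = ∑ a, ∑ b, ∑ c, M b a c :=
  Finset.sum_comm

theorem sum3_swap23 {M : Fin n → Fin n → Fin n → ℝ} :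
    (∑ a, ∑ b, ∑ c, M a b c) = ∑ a, ∑ b, ∑ c, M a c b :=
  Finset.sum_congr rfl fun a _ => Finset.sum_comm

theorem sum3_swap13 {M : Fin n → Fin n → Fin n → ℝ} :
    (∑ a, ∑ b, ∑ c, M a b c) = ∑ a, ∑ b, ∑ c, M c b a := by
  calc (∑ a, ∑ b, ∑ c, M a b c)
      = ∑ a, ∑ b, ∑ c, M a c b := sum3_swap23
    _ = ∑ a, ∑ b, ∑ c, M b c a := sum3_swap12
    _ = ∑ a, ∑ b, ∑ c, M c b a := sum3_swap23

theorem pd3_comm13 {u : (Fin n → ℝ) → ℝ} (hu : Smooth u) (p q r : Fin n) :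
    pd p (pd q (pd r u)) = pd r (pd q (pd p u)) := by
  rw [pd_comm hu q r, pd_comm (pd_smooth hu q) p r, pd_comm hu p q]

theorem pd4_comm14 {u : (Fin n → ℝ) → ℝ} (hu : Smooth u) (p q r s : Fin n) :
    pd p (pd q (pd r (pd s u))) = pd s (pd q (pd r (pd p u))) := by
  rw [pd_comm hu r s, pd_comm (pd_smooth hu r) q s,
    pd_comm (pd_smooth (pd_smooth hu r) q) p s, pd_comm (pd_smooth hu r) p q,
    pd_comm hu p r]

end

/-- for a Killing 3-tensor `k` on `ℝⁿ`, the third order operator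
`D f = k^{abc} ∂_a ∂_b ∂_c f + (3/2)(∂_r k^{rbc}) ∂_b ∂_c f + (1/4)(∂_r ∂_s k^{rsc}) ∂_c f`
commutes with the Laplacian. -/
theorem stmt10 {n : ℕ} (hn : 0 < n)
    (g ginv : Matrix (Fin n) (Fin n) ℝ) (hgsym : g.IsSymm) (hginv : g * ginv = 1)
    (k : Fin n → Fin n → Fin n → (Fin n → ℝ) → ℝ)
    (hsmooth : ∀ a b c, ContDiff ℝ (⊤ : ℕ∞) (k a b c))
    (hsymk : ∀ (a b c : Fin n) (σ : Equiv.Perm (Fin 3)),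
      k (![a, b, c] (σ 0)) (![a, b, c] (σ 1)) (![a, b, c] (σ 2)) = k a b c)
    (hkill : ∀ (a b c d : Fin n) (x : Fin n → ℝ),
      pdUp ginv a (k b c d) x + pdUp ginv b (k a c d) x +
        pdUp ginv c (k a b d) x + pdUp ginv d (k a b c) x = 0)
    (D : ((Fin n → ℝ) → ℝ) → ((Fin n → ℝ) → ℝ))
    (hD : ∀ f x, D f x =
      (∑ a, ∑ b, ∑ c, k a b c x * pd a (pd b (pd c f)) x) +
        (3 / 2) * (∑ b, ∑ c, (∑ r, pd r (k r b c) x) * pd b (pd c f) x) +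
        (1 / 4) * (∑ c, (∑ r, ∑ s, pd r (pd s (k r s c)) x) * pd c f x)) :
    ∀ f, ContDiff ℝ (⊤ : ℕ∞) f → ∀ x, lap ginv (D f) x = D (lap ginv f) x := by
  have hsyminv : ∀ a b, ginv a b = ginv b a := ginv_symm hgsym hginv
  have ksym01 : ∀ a b c : Fin n, k b a c = k a b c := by
    intro a b c
    have := hsymk a b c (Equiv.swap 0 1)
    simpa [Equiv.swap_apply_def, Fin.ext_iff] using this
  have ksym12 : ∀ a b c : Fin n, k a c b = k a b c := by
    intro a b c
    have := hsymk a b c (Equiv.swap 1 2)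
    simpa [Equiv.swap_apply_def, Fin.ext_iff] using this
  have kcyc : ∀ a b c : Fin n, k b c a = k a b c :=
    fun a b c => (ksym12 b a c).trans (ksym01 a b c)
  intro f hf x
  have hfc : ∀ c, ContDiff ℝ (⊤ : ℕ∞) (pd c f) := fun c => pd_smooth hf c
  have hfbc : ∀ b c, ContDiff ℝ (⊤ : ℕ∞) (pd b (pd c f)) := fun b c => pd_smooth (hfc c) b
  have hfabc : ∀ a b c, ContDiff ℝ (⊤ : ℕ∞) (pd a (pd b (pd c f))) :=
    fun a b c => pd_smooth (hfbc b c) a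
  have hTs : ∀ b c, ContDiff ℝ (⊤ : ℕ∞) (Tt k b c) := fun b c => Tt_smooth hsmooth b c
  have hSs : ∀ c, ContDiff ℝ (⊤ : ℕ∞) (Ss k c) := fun c => Ss_smooth hsmooth c
  -- rewrite D f using Tt and Ss
  have hDf : D f = fun y =>
      (∑ a, ∑ b, ∑ c, k a b c y * pd a (pd b (pd c f)) y)
      + 3 / 2 * (∑ b, ∑ c, Tt k b c y * pd b (pd c f) y)
      + 1 / 4 * (∑ c, Ss k c y * pd c f y) := by
    funext y
    rw [hD f y]
    have h3 : (∑ c, (∑ r, ∑ s, pd r (pd s (k r s c)) y) * pd c f y)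
        = ∑ c, Ss k c y * pd c f y :=
      Finset.sum_congr rfl fun c _ => by rw [Ss_stmt hsmooth c]
    rw [h3]
    rfl
  have hE1 : ContDiff ℝ (⊤ : ℕ∞) (fun y => ∑ a, ∑ b, ∑ c, k a b c y * pd a (pd b (pd c f)) y) :=
    smooth_sum _ _ fun a _ => smooth_sum _ _ fun b _ => smooth_sum _ _ fun c _ =>
      (hsmooth a b c).mul (hfabc a b c)
  have hE2 : ContDiff ℝ (⊤ : ℕ∞) (fun y => ∑ b, ∑ c, Tt k b c y * pd b (pd c f) y) :=
    smooth_sum _ _ fun b _ => smooth_sum _ _ fun c _ => (hTs b c).mul (hfbc b c)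
  have hE3 : ContDiff ℝ (⊤ : ℕ∞) (fun y => ∑ c, Ss k c y * pd c f y) :=
    smooth_sum _ _ fun c _ => (hSs c).mul (hfc c)
  have hLHS0 : lap ginv (D f) x
      = lap ginv (fun y => ∑ a, ∑ b, ∑ c, k a b c y * pd a (pd b (pd c f)) y) x
      + 3 / 2 * lap ginv (fun y => ∑ b, ∑ c, Tt k b c y * pd b (pd c f) y) x
      + 1 / 4 * lap ginv (fun y => ∑ c, Ss k c y * pd c f y) x := by
    rw [hDf]
    exact congrFun (lap_comb ginv hE1 hE2 hE3 (3 / 2) (1 / 4)) x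
  -- expand the three Laplacians with the product rule
  have hlapE1 : lap ginv (fun y => ∑ a, ∑ b, ∑ c, k a b c y * pd a (pd b (pd c f)) y) x
      = (∑ a, ∑ b, ∑ c, lap ginv (k a b c) x * pd a (pd b (pd c f)) x)
      + 2 * (∑ a, ∑ b, ∑ c, ∑ m, pdUp ginv m (k a b c) x * pd m (pd a (pd b (pd c f))) x)
      + (∑ a, ∑ b, ∑ c, k a b c x * lap ginv (pd a (pd b (pd c f))) x) := by
    calc lap ginv (fun y => ∑ a, ∑ b, ∑ c, k a b c y * pd a (pd b (pd c f)) y) x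
        = ∑ a, lap ginv (fun y => ∑ b, ∑ c, k a b c y * pd a (pd b (pd c f)) y) x :=
          congrFun (lap_sum ginv Finset.univ _ (fun a _ => smooth_sum _ _ fun b _ =>
            smooth_sum _ _ fun c _ => (hsmooth a b c).mul (hfabc a b c))) x
      _ = ∑ a, ∑ b, lap ginv (fun y => ∑ c, k a b c y * pd a (pd b (pd c f)) y) x :=
          Finset.sum_congr rfl fun a _ =>
            congrFun (lap_sum ginv Finset.univ _ (fun b _ =>
              smooth_sum _ _ fun c _ => (hsmooth a b c).mul (hfabc a b c))) x
      _ = ∑ a, ∑ b, ∑ c, lap ginv (fun y => k a b c y * pd a (pd b (pd c f)) y) x :=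
          Finset.sum_congr rfl fun a _ => Finset.sum_congr rfl fun b _ =>
            congrFun (lap_sum ginv Finset.univ _ (fun c _ =>
              (hsmooth a b c).mul (hfabc a b c))) x
      _ = ∑ a, ∑ b, ∑ c, (lap ginv (k a b c) x * pd a (pd b (pd c f)) x
            + 2 * (∑ m, pdUp ginv m (k a b c) x * pd m (pd a (pd b (pd c f))) x)
            + k a b c x * lap ginv (pd a (pd b (pd c f))) x) :=
          Finset.sum_congr rfl fun a _ => Finset.sum_congr rfl fun b _ =>
            Finset.sum_congr rfl fun c _ =>
              congrFun (lap_mul ginv hsyminv (hsmooth a b c) (hfabc a b c)) x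
      _ = (∑ a, ∑ b, ∑ c, lap ginv (k a b c) x * pd a (pd b (pd c f)) x)
          + 2 * (∑ a, ∑ b, ∑ c, ∑ m, pdUp ginv m (k a b c) x * pd m (pd a (pd b (pd c f))) x)
          + (∑ a, ∑ b, ∑ c, k a b c x * lap ginv (pd a (pd b (pd c f))) x) := by
            simp only [Finset.sum_add_distrib, ← Finset.mul_sum]
  have hlapE2 : lap ginv (fun y => ∑ b, ∑ c, Tt k b c y * pd b (pd c f) y) x
      = (∑ b, ∑ c, lap ginv (Tt k b c) x * pd b (pd c f) x)
      + 2 * (∑ b, ∑ c, ∑ m, pdUp ginv m (Tt k b c) x * pd m (pd b (pd c f)) x)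
      + (∑ b, ∑ c, Tt k b c x * lap ginv (pd b (pd c f)) x) := by
    calc lap ginv (fun y => ∑ b, ∑ c, Tt k b c y * pd b (pd c f) y) x
        = ∑ b, lap ginv (fun y => ∑ c, Tt k b c y * pd b (pd c f) y) x :=
          congrFun (lap_sum ginv Finset.univ _ (fun b _ =>
            smooth_sum _ _ fun c _ => (hTs b c).mul (hfbc b c))) x
      _ = ∑ b, ∑ c, lap ginv (fun y => Tt k b c y * pd b (pd c f) y) x :=
          Finset.sum_congr rfl fun b _ =>
            congrFun (lap_sum ginv Finset.univ _ (fun c _ =>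
              (hTs b c).mul (hfbc b c))) x
      _ = ∑ b, ∑ c, (lap ginv (Tt k b c) x * pd b (pd c f) x
            + 2 * (∑ m, pdUp ginv m (Tt k b c) x * pd m (pd b (pd c f)) x)
            + Tt k b c x * lap ginv (pd b (pd c f)) x) :=
          Finset.sum_congr rfl fun b _ => Finset.sum_congr rfl fun c _ =>
            congrFun (lap_mul ginv hsyminv (hTs b c) (hfbc b c)) x
      _ = (∑ b, ∑ c, lap ginv (Tt k b c) x * pd b (pd c f) x)
          + 2 * (∑ b, ∑ c, ∑ m, pdUp ginv m (Tt k b c) x * pd m (pd b (pd c f)) x)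
          + (∑ b, ∑ c, Tt k b c x * lap ginv (pd b (pd c f)) x) := by
            simp only [Finset.sum_add_distrib, ← Finset.mul_sum]
  have hlapE3 : lap ginv (fun y => ∑ c, Ss k c y * pd c f y) x
      = (∑ c, lap ginv (Ss k c) x * pd c f x)
      + 2 * (∑ c, ∑ m, pdUp ginv m (Ss k c) x * pd m (pd c f) x)
      + (∑ c, Ss k c x * lap ginv (pd c f) x) := by
    calc lap ginv (fun y => ∑ c, Ss k c y * pd c f y) x
        = ∑ c, lap ginv (fun y => Ss k c y * pd c f y) x :=
          congrFun (lap_sum ginv Finset.univ _ (fun c _ => (hSs c).mul (hfc c))) x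
      _ = ∑ c, (lap ginv (Ss k c) x * pd c f x
            + 2 * (∑ m, pdUp ginv m (Ss k c) x * pd m (pd c f) x)
            + Ss k c x * lap ginv (pd c f) x) :=
          Finset.sum_congr rfl fun c _ =>
            congrFun (lap_mul ginv hsyminv (hSs c) (hfc c)) x
      _ = (∑ c, lap ginv (Ss k c) x * pd c f x)
          + 2 * (∑ c, ∑ m, pdUp ginv m (Ss k c) x * pd m (pd c f) x)
          + (∑ c, Ss k c x * lap ginv (pd c f) x) := by
            simp only [Finset.sum_add_distrib, ← Finset.mul_sum]
  -- the right-hand side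
  have hsw1 : ∀ c, pd c (lap ginv f) = lap ginv (pd c f) := fun c => pd_lap_comm ginv hf c
  have hsw2 : ∀ b c, pd b (pd c (lap ginv f)) = lap ginv (pd b (pd c f)) := fun b c => by
    rw [hsw1 c, pd_lap_comm ginv (hfc c) b]
  have hsw3 : ∀ a b c, pd a (pd b (pd c (lap ginv f))) = lap ginv (pd a (pd b (pd c f))) :=
    fun a b c => by rw [hsw2 b c, pd_lap_comm ginv (hfbc b c) a]
  have hRHS : D (lap ginv f) x
      = (∑ a, ∑ b, ∑ c, k a b c x * lap ginv (pd a (pd b (pd c f))) x)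
      + 3 / 2 * (∑ b, ∑ c, Tt k b c x * lap ginv (pd b (pd c f)) x)
      + 1 / 4 * (∑ c, Ss k c x * lap ginv (pd c f) x) := by
    rw [hD (lap ginv f) x]
    have r1 : (∑ a, ∑ b, ∑ c, k a b c x * pd a (pd b (pd c (lap ginv f))) x)
        = ∑ a, ∑ b, ∑ c, k a b c x * lap ginv (pd a (pd b (pd c f))) x :=
      Finset.sum_congr rfl fun a _ => Finset.sum_congr rfl fun b _ =>
        Finset.sum_congr rfl fun c _ => by rw [hsw3 a b c]
    have r2 : (∑ b, ∑ c, (∑ r, pd r (k r b c) x) * pd b (pd c (lap ginv f)) x)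
        = ∑ b, ∑ c, Tt k b c x * lap ginv (pd b (pd c f)) x :=
      Finset.sum_congr rfl fun b _ => Finset.sum_congr rfl fun c _ => by
        rw [hsw2 b c]; rfl
    have r3 : (∑ c, (∑ r, ∑ s, pd r (pd s (k r s c)) x) * pd c (lap ginv f) x)
        = ∑ c, Ss k c x * lap ginv (pd c f) x :=
      Finset.sum_congr rfl fun c _ => by
        rw [hsw1 c, ← congrFun (Ss_stmt hsmooth c) x]
    rw [r1, r2, r3]
  -- zero identities
  have hB2 : (∑ b, ∑ c, lap ginv (Tt k b c) x * pd b (pd c f) x) = 0 :=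
    Finset.sum_eq_zero fun b _ => Finset.sum_eq_zero fun c _ => by
      rw [(lapT_dS hsmooth hgsym hginv ksym12 kcyc hkill b c x).1, zero_mul]
  have hC1 : (∑ c, lap ginv (Ss k c) x * pd c f x) = 0 :=
    Finset.sum_eq_zero fun c _ => by
      rw [lapS_zero hsmooth hgsym hginv ksym12 kcyc hkill c x, zero_mul]
  -- fourth-order terms vanish (Killing equation against symmetric derivatives)
  have hQ4 : (∑ a, ∑ b, ∑ c, ∑ m, pdUp ginv m (k a b c) x * pd m (pd a (pd b (pd c f))) x)
      = 0 := by
    have hrot : (∑ a, ∑ b, ∑ c, ∑ m, pdUp ginv m (k a b c) x * pd m (pd a (pd b (pd c f))) x)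
        = ∑ a, ∑ b, ∑ c, ∑ d, pdUp ginv a (k b c d) x * pd a (pd b (pd c (pd d f))) x :=
      rot4 (M := fun a b c m => pdUp ginv m (k a b c) x * pd m (pd a (pd b (pd c f))) x)
    rw [hrot]
    have h4 : ∑ a, ∑ b, ∑ c, ∑ d,
        ((pdUp ginv a (k b c d) x + pdUp ginv b (k a c d) x + pdUp ginv c (k a b d) x
          + pdUp ginv d (k a b c) x) * pd a (pd b (pd c (pd d f))) x) = 0 :=
      Finset.sum_eq_zero fun a _ => Finset.sum_eq_zero fun b _ =>
        Finset.sum_eq_zero fun c _ => Finset.sum_eq_zero fun d _ => by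
          rw [hkill a b c d x, zero_mul]
    have hsplit : ∑ a, ∑ b, ∑ c, ∑ d,
        ((pdUp ginv a (k b c d) x + pdUp ginv b (k a c d) x + pdUp ginv c (k a b d) x
          + pdUp ginv d (k a b c) x) * pd a (pd b (pd c (pd d f))) x)
        = (∑ a, ∑ b, ∑ c, ∑ d, pdUp ginv a (k b c d) x * pd a (pd b (pd c (pd d f))) x)
        + (∑ a, ∑ b, ∑ c, ∑ d, pdUp ginv b (k a c d) x * pd a (pd b (pd c (pd d f))) x)
        + (∑ a, ∑ b, ∑ c, ∑ d, pdUp ginv c (k a b d) x * pd a (pd b (pd c (pd d f))) x)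
        + (∑ a, ∑ b, ∑ c, ∑ d, pdUp ginv d (k a b c) x * pd a (pd b (pd c (pd d f))) x) := by
      simp only [add_mul, Finset.sum_add_distrib]
    have hs2 : (∑ a, ∑ b, ∑ c, ∑ d, pdUp ginv b (k a c d) x * pd a (pd b (pd c (pd d f))) x)
        = ∑ a, ∑ b, ∑ c, ∑ d, pdUp ginv a (k b c d) x * pd a (pd b (pd c (pd d f))) x := by
      calc (∑ a, ∑ b, ∑ c, ∑ d, pdUp ginv b (k a c d) x * pd a (pd b (pd c (pd d f))) x)
          = ∑ a, ∑ b, ∑ c, ∑ d, pdUp ginv a (k b c d) x * pd b (pd a (pd c (pd d f))) x :=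
            sum4_swap12 (M := fun a b c d =>
              pdUp ginv b (k a c d) x * pd a (pd b (pd c (pd d f))) x)
        _ = ∑ a, ∑ b, ∑ c, ∑ d, pdUp ginv a (k b c d) x * pd a (pd b (pd c (pd d f))) x :=
            Finset.sum_congr rfl fun a _ => Finset.sum_congr rfl fun b _ =>
              Finset.sum_congr rfl fun c _ => Finset.sum_congr rfl fun d _ => by
                rw [pd_comm (pd_smooth (hfc d) c) b a]
    have hs3 : (∑ a, ∑ b, ∑ c, ∑ d, pdUp ginv c (k a b d) x * pd a (pd b (pd c (pd d f))) x)
        = ∑ a, ∑ b, ∑ c, ∑ d, pdUp ginv a (k b c d) x * pd a (pd b (pd c (pd d f))) x := by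
      calc (∑ a, ∑ b, ∑ c, ∑ d, pdUp ginv c (k a b d) x * pd a (pd b (pd c (pd d f))) x)
          = ∑ a, ∑ b, ∑ c, ∑ d, pdUp ginv a (k c b d) x * pd c (pd b (pd a (pd d f))) x :=
            sum4_swap13 (M := fun a b c d =>
              pdUp ginv c (k a b d) x * pd a (pd b (pd c (pd d f))) x)
        _ = ∑ a, ∑ b, ∑ c, ∑ d, pdUp ginv a (k b c d) x * pd a (pd b (pd c (pd d f))) x :=
            Finset.sum_congr rfl fun a _ => Finset.sum_congr rfl fun b _ =>
              Finset.sum_congr rfl fun c _ => Finset.sum_congr rfl fun d _ => by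
                rw [ksym01 b c d, pd3_comm13 (hfc d) c b a]
    have hs4 : (∑ a, ∑ b, ∑ c, ∑ d, pdUp ginv d (k a b c) x * pd a (pd b (pd c (pd d f))) x)
        = ∑ a, ∑ b, ∑ c, ∑ d, pdUp ginv a (k b c d) x * pd a (pd b (pd c (pd d f))) x := by
      calc (∑ a, ∑ b, ∑ c, ∑ d, pdUp ginv d (k a b c) x * pd a (pd b (pd c (pd d f))) x)
          = ∑ a, ∑ b, ∑ c, ∑ d, pdUp ginv a (k d b c) x * pd d (pd b (pd c (pd a f))) x :=
            sum4_swap14 (M := fun a b c d =>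
              pdUp ginv d (k a b c) x * pd a (pd b (pd c (pd d f))) x)
        _ = ∑ a, ∑ b, ∑ c, ∑ d, pdUp ginv a (k b c d) x * pd a (pd b (pd c (pd d f))) x :=
            Finset.sum_congr rfl fun a _ => Finset.sum_congr rfl fun b _ =>
              Finset.sum_congr rfl fun c _ => Finset.sum_congr rfl fun d _ => by
                rw [(kcyc d b c).symm, pd4_comm14 hf d b c a]
    rw [hsplit, hs2, hs3, hs4] at h4
    linarith
  -- third-order terms
  have hQ3N : (∑ b, ∑ c, ∑ m, pdUp ginv m (Tt k b c) x * pd m (pd b (pd c f)) x)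
      = ∑ a, ∑ b, ∑ c, pdUp ginv a (Tt k b c) x * pd a (pd b (pd c f)) x :=
    rot3 (M := fun b c m => pdUp ginv m (Tt k b c) x * pd m (pd b (pd c f)) x)
  have hAB : (∑ a, ∑ b, ∑ c, lap ginv (k a b c) x * pd a (pd b (pd c f)) x)
      + 3 * (∑ a, ∑ b, ∑ c, pdUp ginv a (Tt k b c) x * pd a (pd b (pd c f)) x) = 0 := by
    have h4 : ∑ a, ∑ b, ∑ c,
        ((lap ginv (k a b c) x + pdUp ginv a (Tt k b c) x + pdUp ginv b (Tt k a c) x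
          + pdUp ginv c (Tt k a b) x) * pd a (pd b (pd c f)) x) = 0 :=
      Finset.sum_eq_zero fun a _ => Finset.sum_eq_zero fun b _ =>
        Finset.sum_eq_zero fun c _ => by
          rw [killing_d1 hsmooth hkill a b c x, zero_mul]
    have hsplit : ∑ a, ∑ b, ∑ c,
        ((lap ginv (k a b c) x + pdUp ginv a (Tt k b c) x + pdUp ginv b (Tt k a c) x
          + pdUp ginv c (Tt k a b) x) * pd a (pd b (pd c f)) x)
        = (∑ a, ∑ b, ∑ c, lap ginv (k a b c) x * pd a (pd b (pd c f)) x)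
        + (∑ a, ∑ b, ∑ c, pdUp ginv a (Tt k b c) x * pd a (pd b (pd c f)) x)
        + (∑ a, ∑ b, ∑ c, pdUp ginv b (Tt k a c) x * pd a (pd b (pd c f)) x)
        + (∑ a, ∑ b, ∑ c, pdUp ginv c (Tt k a b) x * pd a (pd b (pd c f)) x) := by
      simp only [add_mul, Finset.sum_add_distrib]
    have hs2 : (∑ a, ∑ b, ∑ c, pdUp ginv b (Tt k a c) x * pd a (pd b (pd c f)) x)
        = ∑ a, ∑ b, ∑ c, pdUp ginv a (Tt k b c) x * pd a (pd b (pd c f)) x := by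
      calc (∑ a, ∑ b, ∑ c, pdUp ginv b (Tt k a c) x * pd a (pd b (pd c f)) x)
          = ∑ a, ∑ b, ∑ c, pdUp ginv a (Tt k b c) x * pd b (pd a (pd c f)) x :=
            sum3_swap12 (M := fun a b c => pdUp ginv b (Tt k a c) x * pd a (pd b (pd c f)) x)
        _ = ∑ a, ∑ b, ∑ c, pdUp ginv a (Tt k b c) x * pd a (pd b (pd c f)) x :=
            Finset.sum_congr rfl fun a _ => Finset.sum_congr rfl fun b _ =>
              Finset.sum_congr rfl fun c _ => by rw [pd_comm (hfc c) b a]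
    have hs3 : (∑ a, ∑ b, ∑ c, pdUp ginv c (Tt k a b) x * pd a (pd b (pd c f)) x)
        = ∑ a, ∑ b, ∑ c, pdUp ginv a (Tt k b c) x * pd a (pd b (pd c f)) x := by
      calc (∑ a, ∑ b, ∑ c, pdUp ginv c (Tt k a b) x * pd a (pd b (pd c f)) x)
          = ∑ a, ∑ b, ∑ c, pdUp ginv a (Tt k c b) x * pd c (pd b (pd a f)) x :=
            sum3_swap13 (M := fun a b c => pdUp ginv c (Tt k a b) x * pd a (pd b (pd c f)) x)
        _ = ∑ a, ∑ b, ∑ c, pdUp ginv a (Tt k b c) x * pd a (pd b (pd c f)) x :=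
            Finset.sum_congr rfl fun a _ => Finset.sum_congr rfl fun b _ =>
              Finset.sum_congr rfl fun c _ => by
                rw [Tt_symm hsmooth ksym12 c b, pd3_comm13 hf c b a]
    rw [hsplit, hs2, hs3] at h4
    linarith
  -- second-order S-terms vanish
  have hQ2 : (∑ c, ∑ m, pdUp ginv m (Ss k c) x * pd m (pd c f) x) = 0 := by
    have hsymQ : (∑ c, ∑ m, pdUp ginv m (Ss k c) x * pd m (pd c f) x)
        = ∑ c, ∑ m, pdUp ginv c (Ss k m) x * pd m (pd c f) x := by
      calc (∑ c, ∑ m, pdUp ginv m (Ss k c) x * pd m (pd c f) x)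
          = ∑ c, ∑ m, pdUp ginv c (Ss k m) x * pd c (pd m f) x :=
            swap_sum (M := fun c m => pdUp ginv m (Ss k c) x * pd m (pd c f) x)
        _ = ∑ c, ∑ m, pdUp ginv c (Ss k m) x * pd m (pd c f) x :=
            Finset.sum_congr rfl fun c _ => Finset.sum_congr rfl fun m _ => by
              rw [pd_comm hf c m]
    have h2 : (∑ c, ∑ m, pdUp ginv m (Ss k c) x * pd m (pd c f) x)
        + (∑ c, ∑ m, pdUp ginv c (Ss k m) x * pd m (pd c f) x)
        = ∑ c, ∑ m, (pdUp ginv m (Ss k c) x + pdUp ginv c (Ss k m) x) * pd m (pd c f) x := by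
      simp only [add_mul, Finset.sum_add_distrib]
    have h3 : ∑ c, ∑ m,
        (pdUp ginv m (Ss k c) x + pdUp ginv c (Ss k m) x) * pd m (pd c f) x = 0 :=
      Finset.sum_eq_zero fun c _ => Finset.sum_eq_zero fun m _ => by
        rw [(lapT_dS hsmooth hgsym hginv ksym12 kcyc hkill m c x).2, zero_mul]
    linarith [hsymQ, h2, h3]
  -- assemble
  rw [hLHS0, hlapE1, hlapE2, hlapE3, hRHS]
  rw [hQ3N] at hlapE2  -- no-op safety
  linarith [hQ4, hQ3N, hAB, hB2, hQ2, hC1]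
end

section
/- Let k^{bc} be a Killing 2-tensor on ℝ^n. Then the double divergence ∂_r ∂_s k^{rs} is a constant function on ℝ^n. -/
section AuxStmt13
variable {n : ℕ}

private lemma hd13 {f : (Fin n → ℝ) → ℝ} (hf : ContDiff ℝ (⊤:ℕ∞) f) (x : Fin n → ℝ) :
    DifferentiableAt ℝ f x :=
  (hf.differentiable (by simp)) x

private lemma pd_smooth13 {f : (Fin n → ℝ) → ℝ} (hf : ContDiff ℝ (⊤:ℕ∞) f) (a : Fin n) :
    ContDiff ℝ (⊤:ℕ∞) (pd a f) := by
  have h := hf.fderiv_right (m := ((⊤:ℕ∞) : WithTop ℕ∞)) (by exact_mod_cast le_top)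
  exact h.clm_apply contDiff_const

private lemma pd_zero13 {a : Fin n} : pd a (fun _ => (0:ℝ)) = fun _ => 0 := by
  funext x; simp [pd]

private lemma pd_comm13 {f : (Fin n → ℝ) → ℝ} (hf : ContDiff ℝ (⊤:ℕ∞) f) (a b : Fin n) :
    pd a (pd b f) = pd b (pd a f) := by
  have hf' : Differentiable ℝ (fderiv ℝ f) :=
    (hf.fderiv_right (m := ((⊤:ℕ∞) : WithTop ℕ∞)) (by exact_mod_cast le_top)).differentiable
      (by simp)
  funext x
  have key : ∀ (u v : Fin n → ℝ),
      fderiv ℝ (fun y => fderiv ℝ f y v) x u = fderiv ℝ (fderiv ℝ f) x u v := by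
    intro u v
    have h := fderiv_clm_apply (c := fderiv ℝ f) (u := fun _ => v) (hf' x)
      (differentiableAt_const v)
    rw [show (fun y => fderiv ℝ f y v) = (fun y => fderiv ℝ f y ((fun _ => v) y)) from rfl, h]
    simp
  have hsym := (hf.contDiffAt (x := x)).isSymmSndFDerivAt
    (by rw [minSmoothness_of_isRCLikeNormedField]; exact WithTop.coe_le_coe.2 le_top)
  show fderiv ℝ (pd b f) x (Pi.single a 1) = fderiv ℝ (pd a f) x (Pi.single b 1)
  rw [show pd b f = fun y => fderiv ℝ f y (Pi.single b 1) from rfl,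
    show pd a f = fun y => fderiv ℝ f y (Pi.single a 1) from rfl, key, key]
  exact hsym _ _

private lemma contract_smooth13 {ι : Type*} [Fintype ι] (c : ι → ℝ)
    (f : ι → (Fin n → ℝ) → ℝ) (hf : ∀ i, ContDiff ℝ (⊤:ℕ∞) (f i)) :
    ContDiff ℝ (⊤:ℕ∞) (fun x => ∑ i, c i * f i x) :=
  ContDiff.sum fun i _ => contDiff_const.mul (hf i)

private lemma sum_smooth13 {ι : Type*} [Fintype ι]
    (f : ι → (Fin n → ℝ) → ℝ) (hf : ∀ i, ContDiff ℝ (⊤:ℕ∞) (f i)) :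
    ContDiff ℝ (⊤:ℕ∞) (fun x => ∑ i, f i x) :=
  ContDiff.sum fun i _ => hf i

private lemma pd_contract13 {ι : Type*} [Fintype ι] (c : ι → ℝ)
    (f : ι → (Fin n → ℝ) → ℝ) (hf : ∀ i, ContDiff ℝ (⊤:ℕ∞) (f i)) (p : Fin n) :
    pd p (fun x => ∑ i, c i * f i x) = fun x => ∑ i, c i * pd p (f i) x := by
  funext x
  have h1 : fderiv ℝ (fun y => ∑ i, c i * f i y) x = ∑ i, c i • fderiv ℝ (f i) x := by
    rw [fderiv_fun_sum (fun i _ => (hd13 (hf i) x).const_mul (c i))]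
    exact Finset.sum_congr rfl fun i _ => fderiv_const_mul (hd13 (hf i) x) (c i)
  show fderiv ℝ (fun y => ∑ i, c i * f i y) x (Pi.single p 1) = _
  rw [h1]
  simp [pd]

private lemma pd_sum13 {ι : Type*} [Fintype ι]
    (f : ι → (Fin n → ℝ) → ℝ) (hf : ∀ i, ContDiff ℝ (⊤:ℕ∞) (f i)) (p : Fin n) :
    pd p (fun x => ∑ i, f i x) = fun x => ∑ i, pd p (f i) x := by
  funext x
  have h1 : fderiv ℝ (fun y => ∑ i, f i y) x = ∑ i, fderiv ℝ (f i) x :=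
    fderiv_fun_sum (fun i _ => hd13 (hf i) x)
  show fderiv ℝ (fun y => ∑ i, f i y) x (Pi.single p 1) = _
  rw [h1]
  simp [pd]

private lemma pd_expand_add13 {ι κ : Type*} [Fintype ι] [Fintype κ]
    (c1 : ι → ℝ) (c2 : κ → ℝ)
    (f1 : ι → (Fin n → ℝ) → ℝ) (f2 : κ → (Fin n → ℝ) → ℝ)
    (h1 : ∀ i, ContDiff ℝ (⊤:ℕ∞) (f1 i)) (h2 : ∀ j, ContDiff ℝ (⊤:ℕ∞) (f2 j)) (p : Fin n) :
    pd p (fun x => (∑ i, c1 i * f1 i x) + (∑ j, c2 j * f2 j x))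
      = fun x => (∑ i, c1 i * pd p (f1 i) x) + (∑ j, c2 j * pd p (f2 j) x) := by
  funext x
  have d1 : DifferentiableAt ℝ (fun y => ∑ i, c1 i * f1 i y) x :=
    hd13 (contract_smooth13 c1 f1 h1) x
  have d2 : DifferentiableAt ℝ (fun y => ∑ j, c2 j * f2 j y) x :=
    hd13 (contract_smooth13 c2 f2 h2) x
  have e1 := congrFun (pd_contract13 c1 f1 h1 p) x
  have e2 := congrFun (pd_contract13 c2 f2 h2 p) x
  show fderiv ℝ (fun y => (∑ i, c1 i * f1 i y) + (∑ j, c2 j * f2 j y)) x (Pi.single p 1) = _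
  rw [fderiv_fun_add d1 d2, ContinuousLinearMap.add_apply, ← e1, ← e2]
  rfl

private lemma pd_expand_add3_13 (c1 c2 c3 : Fin n → ℝ)
    (f1 f2 f3 : Fin n → (Fin n → ℝ) → ℝ)
    (h1 : ∀ i, ContDiff ℝ (⊤:ℕ∞) (f1 i)) (h2 : ∀ i, ContDiff ℝ (⊤:ℕ∞) (f2 i))
    (h3 : ∀ i, ContDiff ℝ (⊤:ℕ∞) (f3 i)) (p : Fin n) :
    pd p (fun x => (∑ i, c1 i * f1 i x) + (∑ i, c2 i * f2 i x) + (∑ i, c3 i * f3 i x))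
      = fun x => (∑ i, c1 i * pd p (f1 i) x) + (∑ i, c2 i * pd p (f2 i) x)
          + (∑ i, c3 i * pd p (f3 i) x) := by
  funext x
  have d1 : DifferentiableAt ℝ (fun y => ∑ i, c1 i * f1 i y) x :=
    hd13 (contract_smooth13 c1 f1 h1) x
  have d2 : DifferentiableAt ℝ (fun y => ∑ i, c2 i * f2 i y) x :=
    hd13 (contract_smooth13 c2 f2 h2) x
  have d3 : DifferentiableAt ℝ (fun y => ∑ i, c3 i * f3 i y) x :=
    hd13 (contract_smooth13 c3 f3 h3) x
  have e1 := congrFun (pd_contract13 c1 f1 h1 p) x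
  have e2 := congrFun (pd_contract13 c2 f2 h2 p) x
  have e3 := congrFun (pd_contract13 c3 f3 h3 p) x
  show fderiv ℝ (fun y => (∑ i, c1 i * f1 i y) + (∑ i, c2 i * f2 i y) + (∑ i, c3 i * f3 i y))
      x (Pi.single p 1) = _
  rw [fderiv_fun_add (d1.fun_add d2) d3, ContinuousLinearMap.add_apply,
    fderiv_fun_add d1 d2, ContinuousLinearMap.add_apply, ← e1, ← e2, ← e3]
  rfl

private lemma contract_delta13 {g ginv : Matrix (Fin n) (Fin n) ℝ}
    (hsymg : ∀ a b, g a b = g b a)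
    (hdelta : ∀ b d : Fin n, (∑ a, g b a * ginv a d) = if b = d then 1 else 0)
    (v : Fin n → Fin n → ℝ) :
    ∑ a, ∑ b, g a b * ∑ d, ginv a d * v b d = ∑ b, v b b := by
  calc ∑ a, ∑ b, g a b * ∑ d, ginv a d * v b d
      = ∑ b, ∑ d, (∑ a, g b a * ginv a d) * v b d := by
        simp only [Finset.mul_sum, Finset.sum_mul]
        rw [Finset.sum_comm]
        refine Finset.sum_congr rfl fun b _ => ?_
        rw [Finset.sum_comm]
        refine Finset.sum_congr rfl fun d _ => Finset.sum_congr rfl fun a _ => ?_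
        rw [hsymg a b]; ring
    _ = ∑ b, v b b := by
        refine Finset.sum_congr rfl fun b _ => ?_
        simp [hdelta b, ite_mul]


private lemma sum_rot13 {M : Type*} [AddCommMonoid M] (f : Fin n → Fin n → Fin n → M) :
    ∑ a, ∑ b, ∑ d, f a b d = ∑ d, ∑ a, ∑ b, f a b d := by
  calc ∑ a, ∑ b, ∑ d, f a b d = ∑ a, ∑ d, ∑ b, f a b d :=
        Finset.sum_congr rfl fun a _ => Finset.sum_comm
    _ = ∑ d, ∑ a, ∑ b, f a b d := Finset.sum_comm

end AuxStmt13

section MainAux13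
variable {n : ℕ}

/-- double divergence summand function -/
private noncomputable def T13 (k : Fin n → Fin n → (Fin n → ℝ) → ℝ) : (Fin n → ℝ) → ℝ :=
  fun x => ∑ rs : Fin n × Fin n, pd rs.1 (pd rs.2 (k rs.1 rs.2)) x

private noncomputable def t13 (g : Matrix (Fin n) (Fin n) ℝ) (k : Fin n → Fin n → (Fin n → ℝ) → ℝ) :
    (Fin n → ℝ) → ℝ :=
  fun x => ∑ ab : Fin n × Fin n, g ab.1 ab.2 * k ab.1 ab.2 x

private noncomputable def dv13 (k : Fin n → Fin n → (Fin n → ℝ) → ℝ) (a : Fin n) : (Fin n → ℝ) → ℝ :=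
  fun x => ∑ c, pd c (k c a) x

private noncomputable def Lt13 (g ginv : Matrix (Fin n) (Fin n) ℝ)
    (k : Fin n → Fin n → (Fin n → ℝ) → ℝ) : (Fin n → ℝ) → ℝ :=
  fun x => ∑ pq : Fin n × Fin n, ginv pq.1 pq.2 * pd pq.1 (pd pq.2 (t13 g k)) x

end MainAux13

/-- for a Killing 2-tensor `k` on `ℝⁿ`, the double divergence
`∂_r ∂_s k^{rs}` is a constant function. -/
theorem stmt13 {n : ℕ} (hn : 0 < n)
    (g ginv : Matrix (Fin n) (Fin n) ℝ) (hgsym : g.IsSymm) (hginv : g * ginv = 1)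
    (k : Fin n → Fin n → (Fin n → ℝ) → ℝ)
    (hsmooth : ∀ b c, ContDiff ℝ (⊤ : ℕ∞) (k b c))
    (hsymk : ∀ b c, k b c = k c b)
    (hkill : ∀ (a b c : Fin n) (x : Fin n → ℝ),
      pdUp ginv a (k b c) x + pdUp ginv b (k c a) x + pdUp ginv c (k a b) x = 0) :
    ∃ C : ℝ, ∀ x : Fin n → ℝ, (∑ r, ∑ s, pd r (pd s (k r s)) x) = C := by
  -- symmetry / inverse facts
  have hsymg : ∀ a b, g a b = g b a := by
    intro a b
    have h := congrFun (congrFun hgsym b) a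
    rwa [Matrix.transpose_apply] at h
  have hdelta : ∀ b d : Fin n, (∑ a, g b a * ginv a d) = if b = d then 1 else 0 := by
    intro b d
    have h : (g * ginv) b d = (1 : Matrix (Fin n) (Fin n) ℝ) b d := by rw [hginv]
    rw [Matrix.mul_apply, Matrix.one_apply] at h
    exact h
  -- smoothness of derivatives of k
  have s1 : ∀ a b c, ContDiff ℝ (⊤:ℕ∞) (pd a (k b c)) :=
    fun a b c => pd_smooth13 (hsmooth b c) a
  have s2 : ∀ p a b c, ContDiff ℝ (⊤:ℕ∞) (pd p (pd a (k b c))) :=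
    fun p a b c => pd_smooth13 (s1 a b c) p
  -- main objects
  have hTs : ContDiff ℝ (⊤:ℕ∞) (T13 k) :=
    sum_smooth13 (fun rs : Fin n × Fin n => pd rs.1 (pd rs.2 (k rs.1 rs.2)))
      (fun rs => s2 rs.1 rs.2 rs.1 rs.2)
  have hts : ContDiff ℝ (⊤:ℕ∞) (t13 g k) :=
    contract_smooth13 (fun ab : Fin n × Fin n => g ab.1 ab.2)
      (fun ab => k ab.1 ab.2) (fun ab => hsmooth ab.1 ab.2)
  have hdvs : ∀ a, ContDiff ℝ (⊤:ℕ∞) (dv13 k a) :=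
    fun a => sum_smooth13 (fun c => pd c (k c a)) (fun c => s1 c c a)
  have hLts : ContDiff ℝ (⊤:ℕ∞) (Lt13 g ginv k) :=
    contract_smooth13 (fun pq : Fin n × Fin n => ginv pq.1 pq.2)
      (fun pq => pd pq.1 (pd pq.2 (t13 g k)))
      (fun pq => pd_smooth13 (pd_smooth13 hts pq.2) pq.1)
  -- expansions of derivatives of the main objects
  have hpdT : ∀ d, pd d (T13 k)
      = fun x => ∑ rs : Fin n × Fin n, pd d (pd rs.1 (pd rs.2 (k rs.1 rs.2))) x :=
    fun d => pd_sum13 (fun rs : Fin n × Fin n => pd rs.1 (pd rs.2 (k rs.1 rs.2)))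
      (fun rs => s2 rs.1 rs.2 rs.1 rs.2) d
  have hpdt : ∀ d, pd d (t13 g k)
      = fun x => ∑ ab : Fin n × Fin n, g ab.1 ab.2 * pd d (k ab.1 ab.2) x :=
    fun d => pd_contract13 (fun ab : Fin n × Fin n => g ab.1 ab.2)
      (fun ab => k ab.1 ab.2) (fun ab => hsmooth ab.1 ab.2) d
  have hpdLt : ∀ d, pd d (Lt13 g ginv k)
      = fun x => ∑ pq : Fin n × Fin n, ginv pq.1 pq.2 * pd d (pd pq.1 (pd pq.2 (t13 g k))) x :=
    fun d => pd_contract13 (fun pq : Fin n × Fin n => ginv pq.1 pq.2)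
      (fun pq => pd pq.1 (pd pq.2 (t13 g k)))
      (fun pq => pd_smooth13 (pd_smooth13 hts pq.2) pq.1) d
  have hpddv : ∀ a p q, pd p (pd q (dv13 k a))
      = fun x => ∑ c, pd p (pd q (pd c (k c a))) x := by
    intro a p q
    have h1 : pd q (dv13 k a) = fun x => ∑ c, pd q (pd c (k c a)) x :=
      pd_sum13 (fun c => pd c (k c a)) (fun c => s1 c c a) q
    rw [h1]
    exact pd_sum13 (fun c => pd q (pd c (k c a))) (fun c => s2 q c c a) p
  -- commutation of derivatives
  have swin : ∀ (f : (Fin n → ℝ) → ℝ), ContDiff ℝ (⊤:ℕ∞) f → ∀ a b c,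
      pd a (pd b (pd c f)) = pd a (pd c (pd b f)) :=
    fun f hf a b c => congrArg (pd a) (pd_comm13 hf b c)
  have rotl : ∀ (f : (Fin n → ℝ) → ℝ), ContDiff ℝ (⊤:ℕ∞) f → ∀ a b c,
      pd a (pd b (pd c f)) = pd b (pd c (pd a f)) := by
    intro f hf a b c
    rw [pd_comm13 (pd_smooth13 hf c) a b]
    exact congrArg (pd b) (pd_comm13 hf a c)
  have rotr : ∀ (f : (Fin n → ℝ) → ℝ), ContDiff ℝ (⊤:ℕ∞) f → ∀ a b c,
      pd a (pd b (pd c f)) = pd c (pd a (pd b f)) := by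
    intro f hf a b c
    rw [rotl f hf a b c, rotl f hf b c a]
  -- third-derivative Killing identity
  have hE3 : ∀ (a b c p q : Fin n) (x : Fin n → ℝ),
      (∑ d, ginv a d * pd p (pd q (pd d (k b c))) x)
      + (∑ d, ginv b d * pd p (pd q (pd d (k c a))) x)
      + (∑ d, ginv c d * pd p (pd q (pd d (k a b))) x) = 0 := by
    intro a b c p q x
    have hz : (fun y => (∑ d, ginv a d * pd d (k b c) y) + (∑ d, ginv b d * pd d (k c a) y)
        + (∑ d, ginv c d * pd d (k a b) y)) = fun _ => (0:ℝ) := funext fun y => hkill a b c y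
    have e1 := pd_expand_add3_13 (ginv a) (ginv b) (ginv c)
      (fun d => pd d (k b c)) (fun d => pd d (k c a)) (fun d => pd d (k a b))
      (fun d => s1 d b c) (fun d => s1 d c a) (fun d => s1 d a b) q
    rw [hz, pd_zero13] at e1
    have e2 := pd_expand_add3_13 (ginv a) (ginv b) (ginv c)
      (fun d => pd q (pd d (k b c))) (fun d => pd q (pd d (k c a)))
      (fun d => pd q (pd d (k a b)))
      (fun d => s2 q d b c) (fun d => s2 q d c a) (fun d => s2 q d a b) p
    rw [← e1, pd_zero13] at e2
    exact (congrFun e2 x).symm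
  -- contracted (once) Killing identity: 2 div + d(trace) = 0
  have hB : ∀ (c : Fin n) (x : Fin n → ℝ),
      (∑ b, 2 * pd b (k b c) x) + (∑ d, ginv c d * pd d (t13 g k) x) = 0 := by
    intro c x
    have h0 : ∑ a, ∑ b, g a b * ((∑ d, ginv a d * pd d (k b c) x)
        + (∑ d, ginv b d * pd d (k c a) x) + (∑ d, ginv c d * pd d (k a b) x)) = 0 := by
      refine Finset.sum_eq_zero fun a _ => Finset.sum_eq_zero fun b _ => ?_
      have hk : (∑ d, ginv a d * pd d (k b c) x)
          + (∑ d, ginv b d * pd d (k c a) x) + (∑ d, ginv c d * pd d (k a b) x) = 0 :=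
        hkill a b c x
      rw [hk, mul_zero]
    simp only [mul_add, Finset.sum_add_distrib] at h0
    have e1 : ∑ a, ∑ b, g a b * ∑ d, ginv a d * pd d (k b c) x = ∑ b, pd b (k b c) x :=
      contract_delta13 hsymg hdelta (fun b d => pd d (k b c) x)
    have e2 : ∑ a, ∑ b, g a b * ∑ d, ginv b d * pd d (k c a) x = ∑ b, pd b (k b c) x := by
      rw [Finset.sum_comm]
      have h' : ∀ (bb aa : Fin n), g aa bb * ∑ d, ginv bb d * pd d (k c aa) x
          = g bb aa * ∑ d, ginv bb d * pd d (k c aa) x := fun bb aa => by rw [hsymg aa bb]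
      calc ∑ bb, ∑ aa, g aa bb * ∑ d, ginv bb d * pd d (k c aa) x
          = ∑ bb, ∑ aa, g bb aa * ∑ d, ginv bb d * pd d (k c aa) x :=
            Finset.sum_congr rfl fun bb _ => Finset.sum_congr rfl fun aa _ => h' bb aa
        _ = ∑ aa, pd aa (k c aa) x :=
            contract_delta13 hsymg hdelta (fun aa d => pd d (k c aa) x)
        _ = ∑ b, pd b (k b c) x :=
            Finset.sum_congr rfl fun aa _ => by rw [hsymk c aa]
    have e3 : ∑ a, ∑ b, g a b * ∑ d, ginv c d * pd d (k a b) x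
        = ∑ d, ginv c d * pd d (t13 g k) x := by
      have ht' : ∀ d, pd d (t13 g k) x = ∑ a, ∑ b, g a b * pd d (k a b) x := by
        intro d
        rw [congrFun (hpdt d) x]
        exact Fintype.sum_prod_type _
      calc ∑ a, ∑ b, g a b * ∑ d, ginv c d * pd d (k a b) x
          = ∑ a, ∑ b, ∑ d, ginv c d * (g a b * pd d (k a b) x) := by
            refine Finset.sum_congr rfl fun a _ => Finset.sum_congr rfl fun b _ => ?_
            rw [Finset.mul_sum]
            exact Finset.sum_congr rfl fun d _ => by ring
        _ = ∑ d, ∑ a, ∑ b, ginv c d * (g a b * pd d (k a b) x) := sum_rot13 _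
        _ = ∑ d, ginv c d * ∑ a, ∑ b, g a b * pd d (k a b) x := by
            refine Finset.sum_congr rfl fun d _ => ?_
            rw [Finset.mul_sum]
            exact Finset.sum_congr rfl fun a _ => (Finset.mul_sum _ _ _).symm
        _ = ∑ d, ginv c d * pd d (t13 g k) x :=
            Finset.sum_congr rfl fun d _ => by rw [ht' d]
    rw [e1, e2, e3] at h0
    have : (∑ b, 2 * pd b (k b c) x) = 2 * ∑ b, pd b (k b c) x := (Finset.mul_sum _ _ _).symm
    rw [this]
    linarith

  -- zero-function form of hB
  have hBz : ∀ c : Fin n, (fun y => (∑ b, 2 * pd b (k b c) y)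
      + (∑ d, ginv c d * pd d (t13 g k) y)) = fun _ => (0:ℝ) :=
    fun c => funext fun y => hB c y
  -- twice-contracted identity : 2 T + Δt = 0
  have hC : ∀ x : Fin n → ℝ, 2 * T13 k x + Lt13 g ginv k x = 0 := by
    intro x
    have hexp : ∀ c : Fin n, (fun y => (∑ b, 2 * pd c (pd b (k b c)) y)
        + (∑ d, ginv c d * pd c (pd d (t13 g k)) y)) = fun _ => (0:ℝ) := by
      intro c
      have e := pd_expand_add13 (fun _ : Fin n => (2:ℝ)) (ginv c)
        (fun b => pd b (k b c)) (fun d => pd d (t13 g k))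
        (fun b => s1 b b c) (fun d => pd_smooth13 hts d) c
      rw [hBz c, pd_zero13] at e
      exact e.symm
    have h0 : (∑ c, ∑ b, 2 * pd c (pd b (k b c)) x)
        + (∑ c, ∑ d, ginv c d * pd c (pd d (t13 g k)) x) = 0 := by
      rw [← Finset.sum_add_distrib]
      exact Finset.sum_eq_zero fun c _ => congrFun (hexp c) x
    have e1 : ∑ c, ∑ b, 2 * pd c (pd b (k b c)) x = 2 * T13 k x := by
      have hT' : T13 k x = ∑ c, ∑ b, pd c (pd b (k b c)) x := by
        rw [show T13 k x = ∑ rs : Fin n × Fin n, pd rs.1 (pd rs.2 (k rs.1 rs.2)) x from rfl,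
          Fintype.sum_prod_type]
        exact Finset.sum_congr rfl fun c _ => Finset.sum_congr rfl fun b _ => by
          rw [hsymk c b]
      rw [hT', Finset.mul_sum]
      exact Finset.sum_congr rfl fun c _ => (Finset.mul_sum _ _ _).symm
    have e2 : ∑ c, ∑ d, ginv c d * pd c (pd d (t13 g k)) x = Lt13 g ginv k x := by
      rw [show Lt13 g ginv k x
          = ∑ pq : Fin n × Fin n, ginv pq.1 pq.2 * pd pq.1 (pd pq.2 (t13 g k)) x from rfl,
        Fintype.sum_prod_type]
    rw [e1, e2] at h0
    exact h0
  -- derivative of hC, contracted with ginv : 2 ∂ᵃT + ∂ᵃΔt = 0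
  have hD : ∀ (a : Fin n) (x : Fin n → ℝ),
      2 * (∑ d, ginv a d * pd d (T13 k) x)
      + (∑ d, ginv a d * pd d (Lt13 g ginv k) x) = 0 := by
    intro a x
    have hCz : (fun y => (∑ rs : Fin n × Fin n, 2 * pd rs.1 (pd rs.2 (k rs.1 rs.2)) y)
        + (∑ pq : Fin n × Fin n, ginv pq.1 pq.2 * pd pq.1 (pd pq.2 (t13 g k)) y))
        = fun _ => (0:ℝ) := by
      funext y
      have h := hC y
      rw [show (2:ℝ) * T13 k y
        = ∑ rs : Fin n × Fin n, 2 * pd rs.1 (pd rs.2 (k rs.1 rs.2)) y from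
          Finset.mul_sum _ _ _] at h
      exact h
    have hexp : ∀ d : Fin n,
        (fun y => (∑ rs : Fin n × Fin n, 2 * pd d (pd rs.1 (pd rs.2 (k rs.1 rs.2))) y)
          + (∑ pq : Fin n × Fin n, ginv pq.1 pq.2 * pd d (pd pq.1 (pd pq.2 (t13 g k))) y))
        = fun _ => (0:ℝ) := by
      intro d
      have e := pd_expand_add13 (fun _ : Fin n × Fin n => (2:ℝ))
        (fun pq : Fin n × Fin n => ginv pq.1 pq.2)
        (fun rs : Fin n × Fin n => pd rs.1 (pd rs.2 (k rs.1 rs.2)))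
        (fun pq : Fin n × Fin n => pd pq.1 (pd pq.2 (t13 g k)))
        (fun rs => s2 rs.1 rs.2 rs.1 rs.2)
        (fun pq => pd_smooth13 (pd_smooth13 hts pq.2) pq.1) d
      rw [hCz, pd_zero13] at e
      exact e.symm
    have h0 : (∑ d, ginv a d * ∑ rs : Fin n × Fin n, 2 * pd d (pd rs.1 (pd rs.2 (k rs.1 rs.2))) x)
        + (∑ d, ginv a d *
            ∑ pq : Fin n × Fin n, ginv pq.1 pq.2 * pd d (pd pq.1 (pd pq.2 (t13 g k))) x) = 0 := by
      rw [← Finset.sum_add_distrib]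
      refine Finset.sum_eq_zero fun d _ => ?_
      rw [← mul_add]
      rw [congrFun (hexp d) x, mul_zero]
    have e1 : ∀ d, ginv a d * ∑ rs : Fin n × Fin n, 2 * pd d (pd rs.1 (pd rs.2 (k rs.1 rs.2))) x
        = 2 * (ginv a d * pd d (T13 k) x) := by
      intro d
      rw [show (∑ rs : Fin n × Fin n, 2 * pd d (pd rs.1 (pd rs.2 (k rs.1 rs.2))) x)
          = 2 * ∑ rs : Fin n × Fin n, pd d (pd rs.1 (pd rs.2 (k rs.1 rs.2))) x from
          (Finset.mul_sum _ _ _).symm, ← congrFun (hpdT d) x]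
      ring
    have e2 : ∀ d, ginv a d *
        ∑ pq : Fin n × Fin n, ginv pq.1 pq.2 * pd d (pd pq.1 (pd pq.2 (t13 g k))) x
        = ginv a d * pd d (Lt13 g ginv k) x := by
      intro d
      rw [← congrFun (hpdLt d) x]
    rw [Finset.sum_congr rfl (fun d _ => e1 d), Finset.sum_congr rfl (fun d _ => e2 d),
      ← Finset.mul_sum] at h0
    exact h0

  -- divergence-contracted third-derivative identity : ∂ᵃT + 2 Δ(div a) = 0
  have hA : ∀ (a : Fin n) (x : Fin n → ℝ),
      (∑ d, ginv a d * pd d (T13 k) x)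
      + 2 * (∑ p, ∑ q, ∑ e, ginv p q * pd p (pd q (pd e (k e a))) x) = 0 := by
    intro a x
    have h0 : (∑ bc : Fin n × Fin n, ∑ d,
          ginv a d * pd bc.1 (pd bc.2 (pd d (k bc.1 bc.2))) x)
        + (∑ bc : Fin n × Fin n, ∑ d,
          ginv bc.1 d * pd bc.1 (pd bc.2 (pd d (k bc.2 a))) x)
        + (∑ bc : Fin n × Fin n, ∑ d,
          ginv bc.2 d * pd bc.1 (pd bc.2 (pd d (k a bc.1))) x) = 0 := by
      rw [← Finset.sum_add_distrib, ← Finset.sum_add_distrib]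
      exact Finset.sum_eq_zero fun bc _ => hE3 a bc.1 bc.2 bc.1 bc.2 x
    have e1 : ∑ bc : Fin n × Fin n, ∑ d, ginv a d * pd bc.1 (pd bc.2 (pd d (k bc.1 bc.2))) x
        = ∑ d, ginv a d * pd d (T13 k) x := by
      rw [Finset.sum_comm]
      refine Finset.sum_congr rfl fun d _ => ?_
      calc ∑ bc : Fin n × Fin n, ginv a d * pd bc.1 (pd bc.2 (pd d (k bc.1 bc.2))) x
          = ∑ bc : Fin n × Fin n, ginv a d * pd d (pd bc.1 (pd bc.2 (k bc.1 bc.2))) x :=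
            Finset.sum_congr rfl fun bc _ => by
              rw [congrFun (rotr (k bc.1 bc.2) (hsmooth bc.1 bc.2) bc.1 bc.2 d) x]
        _ = ginv a d * ∑ bc : Fin n × Fin n, pd d (pd bc.1 (pd bc.2 (k bc.1 bc.2))) x :=
            (Finset.mul_sum _ _ _).symm
        _ = ginv a d * pd d (T13 k) x := by rw [← congrFun (hpdT d) x]
    have e2 : ∑ bc : Fin n × Fin n, ∑ d, ginv bc.1 d * pd bc.1 (pd bc.2 (pd d (k bc.2 a))) x
        = ∑ p, ∑ q, ∑ e, ginv p q * pd p (pd q (pd e (k e a))) x := by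
      rw [Fintype.sum_prod_type]
      calc ∑ b, ∑ c, ∑ d, ginv b d * pd b (pd c (pd d (k c a))) x
          = ∑ b, ∑ c, ∑ d, ginv b d * pd b (pd d (pd c (k c a))) x :=
            Finset.sum_congr rfl fun b _ => Finset.sum_congr rfl fun c _ =>
              Finset.sum_congr rfl fun d _ => by
                rw [congrFun (swin (k c a) (hsmooth c a) b c d) x]
        _ = ∑ b, ∑ d, ∑ c, ginv b d * pd b (pd d (pd c (k c a))) x :=
            Finset.sum_congr rfl fun b _ => Finset.sum_comm
    have e3 : ∑ bc : Fin n × Fin n, ∑ d, ginv bc.2 d * pd bc.1 (pd bc.2 (pd d (k a bc.1))) x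
        = ∑ p, ∑ q, ∑ e, ginv p q * pd p (pd q (pd e (k e a))) x := by
      rw [Fintype.sum_prod_type]
      calc ∑ b, ∑ c, ∑ d, ginv c d * pd b (pd c (pd d (k a b))) x
          = ∑ b, ∑ c, ∑ d, ginv c d * pd c (pd d (pd b (k b a))) x :=
            Finset.sum_congr rfl fun b _ => Finset.sum_congr rfl fun c _ =>
              Finset.sum_congr rfl fun d _ => by
                rw [hsymk a b, congrFun (rotl (k b a) (hsmooth b a) b c d) x]
        _ = ∑ c, ∑ d, ∑ b, ginv c d * pd c (pd d (pd b (k b a))) x :=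
            (sum_rot13 (fun c d b => ginv c d * pd c (pd d (pd b (k b a))) x)).symm
    rw [e1, e2, e3] at h0
    linarith
  -- Laplacian of hB : 2 Δ(div a) + ∂ᵃΔt = 0
  have hBp : ∀ (a : Fin n) (x : Fin n → ℝ),
      2 * (∑ p, ∑ q, ∑ e, ginv p q * pd p (pd q (pd e (k e a))) x)
      + (∑ d, ginv a d * pd d (Lt13 g ginv k) x) = 0 := by
    intro a x
    have hexp1 : ∀ q : Fin n, (fun y => (∑ b, 2 * pd q (pd b (k b a)) y)
        + (∑ d, ginv a d * pd q (pd d (t13 g k)) y)) = fun _ => (0:ℝ) := by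
      intro q
      have e := pd_expand_add13 (fun _ : Fin n => (2:ℝ)) (ginv a)
        (fun b => pd b (k b a)) (fun d => pd d (t13 g k))
        (fun b => s1 b b a) (fun d => pd_smooth13 hts d) q
      rw [hBz a, pd_zero13] at e
      exact e.symm
    have hexp2 : ∀ p q : Fin n, (fun y => (∑ b, 2 * pd p (pd q (pd b (k b a))) y)
        + (∑ d, ginv a d * pd p (pd q (pd d (t13 g k))) y)) = fun _ => (0:ℝ) := by
      intro p q
      have e := pd_expand_add13 (fun _ : Fin n => (2:ℝ)) (ginv a)
        (fun b => pd q (pd b (k b a))) (fun d => pd q (pd d (t13 g k)))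
        (fun b => s2 q b b a) (fun d => pd_smooth13 (pd_smooth13 hts d) q) p
      rw [hexp1 q, pd_zero13] at e
      exact e.symm
    have h0 : (∑ pq : Fin n × Fin n,
          ginv pq.1 pq.2 * ∑ b, 2 * pd pq.1 (pd pq.2 (pd b (k b a))) x)
        + (∑ pq : Fin n × Fin n,
          ginv pq.1 pq.2 * ∑ d, ginv a d * pd pq.1 (pd pq.2 (pd d (t13 g k))) x) = 0 := by
      rw [← Finset.sum_add_distrib]
      refine Finset.sum_eq_zero fun pq _ => ?_
      rw [← mul_add, congrFun (hexp2 pq.1 pq.2) x, mul_zero]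
    have e1 : ∑ pq : Fin n × Fin n,
          ginv pq.1 pq.2 * ∑ b, 2 * pd pq.1 (pd pq.2 (pd b (k b a))) x
        = 2 * (∑ p, ∑ q, ∑ e, ginv p q * pd p (pd q (pd e (k e a))) x) := by
      rw [Fintype.sum_prod_type]
      calc ∑ p, ∑ q, ginv p q * ∑ b, 2 * pd p (pd q (pd b (k b a))) x
          = ∑ p, ∑ q, 2 * ∑ b, ginv p q * pd p (pd q (pd b (k b a))) x := by
            refine Finset.sum_congr rfl fun p _ => Finset.sum_congr rfl fun q _ => ?_
            rw [Finset.mul_sum, Finset.mul_sum]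
            exact Finset.sum_congr rfl fun b _ => by ring
        _ = 2 * ∑ p, ∑ q, ∑ b, ginv p q * pd p (pd q (pd b (k b a))) x := by
            rw [Finset.mul_sum]
            refine Finset.sum_congr rfl fun p _ => ?_
            rw [Finset.mul_sum]
    have e2 : ∑ pq : Fin n × Fin n,
          ginv pq.1 pq.2 * ∑ d, ginv a d * pd pq.1 (pd pq.2 (pd d (t13 g k))) x
        = ∑ d, ginv a d * pd d (Lt13 g ginv k) x := by
      calc ∑ pq : Fin n × Fin n,
            ginv pq.1 pq.2 * ∑ d, ginv a d * pd pq.1 (pd pq.2 (pd d (t13 g k))) x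
          = ∑ pq : Fin n × Fin n, ∑ d,
              ginv a d * (ginv pq.1 pq.2 * pd d (pd pq.1 (pd pq.2 (t13 g k))) x) := by
            refine Finset.sum_congr rfl fun pq _ => ?_
            rw [Finset.mul_sum]
            refine Finset.sum_congr rfl fun d _ => ?_
            rw [congrFun (rotr (t13 g k) hts pq.1 pq.2 d) x]
            ring
        _ = ∑ d, ∑ pq : Fin n × Fin n,
              ginv a d * (ginv pq.1 pq.2 * pd d (pd pq.1 (pd pq.2 (t13 g k))) x) :=
            Finset.sum_comm
        _ = ∑ d, ginv a d * ∑ pq : Fin n × Fin n,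
              ginv pq.1 pq.2 * pd d (pd pq.1 (pd pq.2 (t13 g k))) x :=
            Finset.sum_congr rfl fun d _ => (Finset.mul_sum _ _ _).symm
        _ = ∑ d, ginv a d * pd d (Lt13 g ginv k) x :=
            Finset.sum_congr rfl fun d _ => by rw [← congrFun (hpdLt d) x]
    rw [e1, e2] at h0
    exact h0
  -- combine : ∂ᵃ T = 0
  have hP : ∀ (a : Fin n) (x : Fin n → ℝ), (∑ d, ginv a d * pd d (T13 k) x) = 0 := by
    intro a x
    have h1 := hA a x
    have h2 := hBp a x
    have h3 := hD a x
    linarith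
  have hPd : ∀ (r : Fin n) (x : Fin n → ℝ), pd r (T13 k) x = 0 := by
    intro r x
    have h0 : ∑ aa, g r aa * ∑ d, ginv aa d * pd d (T13 k) x = 0 :=
      Finset.sum_eq_zero fun aa _ => by rw [hP aa x, mul_zero]
    have e : ∑ aa, g r aa * ∑ d, ginv aa d * pd d (T13 k) x = pd r (T13 k) x := by
      calc ∑ aa, g r aa * ∑ d, ginv aa d * pd d (T13 k) x
          = ∑ d, (∑ aa, g r aa * ginv aa d) * pd d (T13 k) x := by
            simp only [Finset.mul_sum]
            rw [Finset.sum_comm]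
            refine Finset.sum_congr rfl fun d _ => ?_
            rw [Finset.sum_mul]
            exact Finset.sum_congr rfl fun aa _ => by ring
        _ = pd r (T13 k) x := by
            refine Eq.trans (Finset.sum_congr rfl fun d _ => by rw [hdelta r d]) ?_
            simp
    rw [e] at h0
    exact h0
  -- conclude : T is constant
  have hTdiff : Differentiable ℝ (T13 k) := hTs.differentiable (by simp)
  have hfz : ∀ x, fderiv ℝ (T13 k) x = 0 := by
    intro x
    ext v
    have hv : v = ∑ i, v i • (Pi.single i (1:ℝ) : Fin n → ℝ) := by
      funext j
      rw [Finset.sum_apply]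
      simp [Pi.single_apply]
    rw [ContinuousLinearMap.zero_apply]
    conv_lhs => rw [hv]
    rw [map_sum]
    refine Finset.sum_eq_zero fun i _ => ?_
    rw [map_smul]
    have hsingle : fderiv ℝ (T13 k) x (Pi.single i 1) = pd i (T13 k) x := rfl
    rw [hsingle, hPd i x, smul_zero]
  refine ⟨T13 k 0, fun x => ?_⟩
  have hgoal : (∑ r, ∑ s, pd r (pd s (k r s)) x) = T13 k x := by
    rw [show T13 k x = ∑ rs : Fin n × Fin n, pd rs.1 (pd rs.2 (k rs.1 rs.2)) x from rfl]
    exact (Fintype.sum_prod_type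
      (fun rs : Fin n × Fin n => pd rs.1 (pd rs.2 (k rs.1 rs.2)) x)).symm
  rw [hgoal]
  exact is_const_of_fderiv_eq_zero hTdiff hfz x 0
end

section
/- Let k^{abc} be a Killing 3-tensor on ℝ^n, and let t^a = g_{rs} k^{ars} denote its g-trace vector field. Then the following identities hold: (i) ∂_r k^{rab} = −(1/2)(∂^a t^b + ∂^b t^a); (ii) the divergence of the trace vanishes, ∂_r t^r = 0; (iii) ∂_r ∂_s k^{rsa} = −(1/2) Δ t^a, where Δ = g^{bc}∂_b∂_c acts componentwise. -/
section Aux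

noncomputable section

lemma aux_diff_of_contDiff {n : ℕ} {f : (Fin n → ℝ) → ℝ}
    (hf : ContDiff ℝ (⊤ : ℕ∞) f) : Differentiable ℝ f :=
  hf.differentiable (by simp)

lemma aux_pd_const_mul {n : ℕ} (a : Fin n) (c : ℝ) {f : (Fin n → ℝ) → ℝ}
    (hf : Differentiable ℝ f) (x : Fin n → ℝ) :
    pd a (fun y => c * f y) x = c * pd a f x := by
  simp [pd, fderiv_const_mul (hf x)]

lemma aux_pd_add {n : ℕ} (a : Fin n) {f g : (Fin n → ℝ) → ℝ}
    (hf : Differentiable ℝ f) (hg : Differentiable ℝ g) (x : Fin n → ℝ) :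
    pd a (fun y => f y + g y) x = pd a f x + pd a g x := by
  simp [pd, fderiv_fun_add (hf x) (hg x)]

lemma aux_pd_sum {n : ℕ} (a : Fin n) {ι : Type*} (s : Finset ι)
    (f : ι → (Fin n → ℝ) → ℝ) (hf : ∀ i ∈ s, Differentiable ℝ (f i)) (x : Fin n → ℝ) :
    pd a (fun y => ∑ i ∈ s, f i y) x = ∑ i ∈ s, pd a (f i) x := by
  simp only [pd]
  rw [fderiv_fun_sum (fun i hi => (hf i hi) x)]
  simp

lemma aux_contDiff_pd {n : ℕ} (a : Fin n) {f : (Fin n → ℝ) → ℝ}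
    (hf : ContDiff ℝ (⊤ : ℕ∞) f) : ContDiff ℝ (⊤ : ℕ∞) (pd a f) := by
  have h1 : ContDiff ℝ (⊤ : ℕ∞) (fderiv ℝ f) := hf.fderiv_right (by exact_mod_cast le_top)
  exact h1.clm_apply contDiff_const

lemma aux_pd_comm {n : ℕ} (a b : Fin n) {f : (Fin n → ℝ) → ℝ}
    (hf : ContDiff ℝ (⊤ : ℕ∞) f) (x : Fin n → ℝ) :
    pd a (pd b f) x = pd b (pd a f) x := by
  have hdf : ContDiff ℝ (⊤ : ℕ∞) (fderiv ℝ f) := hf.fderiv_right (by exact_mod_cast le_top)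
  have hder : ∀ y, HasFDerivAt f (fderiv ℝ f y) y := fun y =>
    (aux_diff_of_contDiff hf y).hasFDerivAt
  have hd2 : HasFDerivAt (fderiv ℝ f) (fderiv ℝ (fderiv ℝ f) x) x :=
    (hdf.differentiable (by simp) x).hasFDerivAt
  have hsymm := second_derivative_symmetric hder hd2
  have key : ∀ v w : Fin n → ℝ,
      fderiv ℝ (fun y => fderiv ℝ f y w) x v = fderiv ℝ (fderiv ℝ f) x v w := by
    intro v w
    have h : HasFDerivAt (fun y => fderiv ℝ f y w)
        ((ContinuousLinearMap.apply ℝ ℝ w).comp (fderiv ℝ (fderiv ℝ f) x)) x :=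
      (ContinuousLinearMap.apply ℝ ℝ w).hasFDerivAt.comp x hd2
    rw [h.fderiv]; rfl
  show fderiv ℝ (fun y => fderiv ℝ f y (Pi.single b 1)) x (Pi.single a 1) =
    fderiv ℝ (fun y => fderiv ℝ f y (Pi.single a 1)) x (Pi.single b 1)
  rw [key, key, hsymm]

lemma aux_sum3_swap {n : ℕ} (A : Fin n → Fin n → Fin n → ℝ) :
    ∑ r, ∑ s, ∑ u, A r s u = ∑ u, ∑ r, ∑ s, A r s u := by
  calc ∑ r, ∑ s, ∑ u, A r s u = ∑ r, ∑ u, ∑ s, A r s u :=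
        Finset.sum_congr rfl (fun r _ => Finset.sum_comm)
    _ = ∑ u, ∑ r, ∑ s, A r s u := Finset.sum_comm

lemma aux_contract_sum {n : ℕ} (g ginv : Matrix (Fin n) (Fin n) ℝ)
    (hginv : g * ginv = 1) (F : Fin n → ℝ) (s : Fin n) :
    ∑ u, (∑ r, g s r * ginv r u) * F u = F s := by
  have h1 : ∀ u, (∑ r, g s r * ginv r u) = (g * ginv) s u := fun u =>
    (Matrix.mul_apply).symm
  simp [h1, hginv, Matrix.one_apply, ite_mul, Finset.sum_ite_eq]

lemma aux_gcontract {n : ℕ} (g ginv : Matrix (Fin n) (Fin n) ℝ)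
    (hgs : ∀ i j, g i j = g j i) (hginv : g * ginv = 1) (P : Fin n → Fin n → ℝ) :
    ∑ r, ∑ s, g r s * (∑ u, ginv r u * P s u) = ∑ s, P s s := by
  simp_rw [Finset.mul_sum]
  rw [Finset.sum_comm]
  refine Finset.sum_congr rfl fun s _ => ?_
  rw [Finset.sum_comm]
  have h : ∀ u, (∑ r, g r s * (ginv r u * P s u)) = (∑ r, g s r * ginv r u) * P s u := by
    intro u
    rw [Finset.sum_mul]
    refine Finset.sum_congr rfl fun r _ => ?_
    rw [hgs r s]; ring
  simp_rw [h]
  exact aux_contract_sum g ginv hginv _ s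

lemma aux_gcontract' {n : ℕ} (g ginv : Matrix (Fin n) (Fin n) ℝ)
    (hginv : g * ginv = 1) (P : Fin n → Fin n → ℝ) :
    ∑ r, ∑ s, g r s * (∑ u, ginv s u * P r u) = ∑ r, P r r := by
  refine Finset.sum_congr rfl fun r _ => ?_
  have h : ∀ s, g r s * (∑ u, ginv s u * P r u) = ∑ u, g r s * ginv s u * P r u := by
    intro s; rw [Finset.mul_sum]; exact Finset.sum_congr rfl fun u _ => by ring
  simp_rw [h]
  rw [Finset.sum_comm]
  have h2 : ∀ u, (∑ s, g r s * ginv s u * P r u) = (∑ s, g r s * ginv s u) * P r u := by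
    intro u; rw [Finset.sum_mul]
  simp_rw [h2]
  exact aux_contract_sum g ginv hginv _ r

end

end Aux

/-- for a Killing 3-tensor `k` on `ℝⁿ` with trace vector field
`t^a = g_{rs} k^{ars}`: (i) `∂_r k^{rab} = -(1/2)(∂^a t^b + ∂^b t^a)`;
(ii) `∂_r t^r = 0`; (iii) `∂_r ∂_s k^{rsa} = -(1/2) Δ t^a`. -/
theorem stmt14 {n : ℕ} (hn : 0 < n)
    (g ginv : Matrix (Fin n) (Fin n) ℝ) (hgsym : g.IsSymm) (hginv : g * ginv = 1)
    (k : Fin n → Fin n → Fin n → (Fin n → ℝ) → ℝ)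
    (hsmooth : ∀ a b c, ContDiff ℝ (⊤ : ℕ∞) (k a b c))
    (hsymk : ∀ (a b c : Fin n) (σ : Equiv.Perm (Fin 3)),
      k (![a, b, c] (σ 0)) (![a, b, c] (σ 1)) (![a, b, c] (σ 2)) = k a b c)
    (hkill : ∀ (a b c d : Fin n) (x : Fin n → ℝ),
      pdUp ginv a (k b c d) x + pdUp ginv b (k a c d) x +
        pdUp ginv c (k a b d) x + pdUp ginv d (k a b c) x = 0)
    (t : Fin n → (Fin n → ℝ) → ℝ)
    (ht : ∀ (a : Fin n) (y : Fin n → ℝ), t a y = ∑ r, ∑ s, g r s * k a r s y) :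
    (∀ (a b : Fin n) (x : Fin n → ℝ),
      (∑ r, pd r (k r a b) x) = -(1/2) * (pdUp ginv a (t b) x + pdUp ginv b (t a) x)) ∧
    (∀ x : Fin n → ℝ, (∑ r, pd r (t r) x) = 0) ∧
    (∀ (a : Fin n) (x : Fin n → ℝ),
      (∑ r, ∑ s, pd r (pd s (k r s a)) x) = -(1/2) * lap ginv (t a) x) := by
  classical
  have hgs : ∀ i j, g i j = g j i := fun i j => (Matrix.IsSymm.apply hgsym i j).symm
  have hdk : ∀ a b c, Differentiable ℝ (k a b c) := fun a b c =>
    aux_diff_of_contDiff (hsmooth a b c)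
  have htfun : ∀ a, t a = fun y => ∑ r, ∑ s, g r s * k a r s y := fun a => funext (ht a)
  have hts : ∀ a, ContDiff ℝ (⊤ : ℕ∞) (t a) := by
    intro a; rw [htfun a]
    exact ContDiff.sum fun r _ => ContDiff.sum fun s _ => contDiff_const.mul (hsmooth a r s)
  have hdt : ∀ a, Differentiable ℝ (t a) := fun a => aux_diff_of_contDiff (hts a)
  -- symmetry of k
  have hk01 : ∀ a b c, k a b c = k b a c := by
    intro a b c
    have h := hsymk b a c (Equiv.swap 0 1)
    rw [show ((Equiv.swap (0 : Fin 3) 1) 0) = 1 from by decide,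
        show ((Equiv.swap (0 : Fin 3) 1) 1) = 0 from by decide,
        show ((Equiv.swap (0 : Fin 3) 1) 2) = 2 from by decide] at h
    simpa using h
  have hk12 : ∀ a b c, k a b c = k a c b := by
    intro a b c
    have h := hsymk a c b (Equiv.swap 1 2)
    rw [show ((Equiv.swap (1 : Fin 3) 2) 0) = 0 from by decide,
        show ((Equiv.swap (1 : Fin 3) 2) 1) = 2 from by decide,
        show ((Equiv.swap (1 : Fin 3) 2) 2) = 1 from by decide] at h
    simpa using h
  have hkc : ∀ r s b, k r s b = k b r s := by
    intro r s b
    rw [hk12 r s b, hk01 r b s]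
  -- expansion of pd of t
  have hdin : ∀ b r, Differentiable ℝ (fun y => ∑ s, g r s * k b r s y) := fun b r =>
    Differentiable.fun_sum (fun s _ => (hdk b r s).const_mul _)
  have hpdt : ∀ (u b : Fin n) (x : Fin n → ℝ),
      pd u (t b) x = ∑ r, ∑ s, g r s * pd u (k b r s) x := by
    intro u b x
    calc pd u (t b) x = ∑ r, pd u (fun y => ∑ s, g r s * k b r s y) x := by
          rw [htfun b]
          exact aux_pd_sum u Finset.univ _ (fun r _ => hdin b r) x
      _ = ∑ r, ∑ s, g r s * pd u (k b r s) x := by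
          refine Finset.sum_congr rfl fun r _ => ?_
          rw [aux_pd_sum u Finset.univ _ (fun s _ => (hdk b r s).const_mul _) x]
          exact Finset.sum_congr rfl fun s _ => aux_pd_const_mul u _ (hdk b r s) x
  -- Part (i)
  have part1 : ∀ (a b : Fin n) (x : Fin n → ℝ),
      (∑ r, pd r (k r a b) x) = -(1/2) * (pdUp ginv a (t b) x + pdUp ginv b (t a) x) := by
    intro a b x
    have h0 : ∑ r, ∑ s, g r s * (pdUp ginv r (k s a b) x + pdUp ginv s (k r a b) x +
        pdUp ginv a (k r s b) x + pdUp ginv b (k r s a) x) = 0 := by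
      simp only [hkill, mul_zero, Finset.sum_const_zero]
    simp only [mul_add, Finset.sum_add_distrib] at h0
    have hA : (∑ r, ∑ s, g r s * pdUp ginv r (k s a b) x) = ∑ s, pd s (k s a b) x := by
      simp only [pdUp]
      exact aux_gcontract g ginv hgs hginv (fun s u => pd u (k s a b) x)
    have hB : (∑ r, ∑ s, g r s * pdUp ginv s (k r a b) x) = ∑ r, pd r (k r a b) x := by
      simp only [pdUp]
      exact aux_gcontract' g ginv hginv (fun r u => pd u (k r a b) x)
    have hC : (∑ r, ∑ s, g r s * pdUp ginv a (k r s b) x) = pdUp ginv a (t b) x := by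
      simp only [pdUp]
      simp_rw [Finset.mul_sum]
      rw [aux_sum3_swap]
      refine Finset.sum_congr rfl fun u _ => ?_
      rw [hpdt u b x, Finset.mul_sum]
      refine Finset.sum_congr rfl fun r _ => ?_
      rw [Finset.mul_sum]
      refine Finset.sum_congr rfl fun s _ => ?_
      rw [hkc r s b]
      ring
    have hD : (∑ r, ∑ s, g r s * pdUp ginv b (k r s a) x) = pdUp ginv b (t a) x := by
      simp only [pdUp]
      simp_rw [Finset.mul_sum]
      rw [aux_sum3_swap]
      refine Finset.sum_congr rfl fun u _ => ?_
      rw [hpdt u a x, Finset.mul_sum]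
      refine Finset.sum_congr rfl fun r _ => ?_
      rw [Finset.mul_sum]
      refine Finset.sum_congr rfl fun s _ => ?_
      rw [hkc r s a]
      ring
    rw [hA, hB, hC, hD] at h0
    have hAB : (∑ s, pd s (k s a b) x) = ∑ r, pd r (k r a b) x := rfl
    rw [hAB] at h0
    linarith
  -- Part (ii)
  have part2 : ∀ x : Fin n → ℝ, (∑ r, pd r (t r) x) = 0 := by
    intro x
    have hL : ∑ a, ∑ b, g a b * (∑ r, pd r (k r a b) x) = ∑ r, pd r (t r) x := by
      simp_rw [Finset.mul_sum]
      rw [aux_sum3_swap]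
      refine Finset.sum_congr rfl fun r _ => ?_
      rw [hpdt r r x]
    have hR : ∑ a, ∑ b, g a b * (-(1/2) * (pdUp ginv a (t b) x + pdUp ginv b (t a) x)) =
        -(∑ r, pd r (t r) x) := by
      have hexp : ∀ (a b : Fin n), g a b * (-(1/2) * (pdUp ginv a (t b) x + pdUp ginv b (t a) x))
          = -(1/2) * (g a b * pdUp ginv a (t b) x) + -(1/2) * (g a b * pdUp ginv b (t a) x) := by
        intro a b; ring
      simp_rw [hexp, Finset.sum_add_distrib, ← Finset.mul_sum]
      have hS1 : (∑ a, ∑ b, g a b * pdUp ginv a (t b) x) = ∑ b, pd b (t b) x := by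
        simp only [pdUp]
        exact aux_gcontract g ginv hgs hginv (fun b u => pd u (t b) x)
      have hS2 : (∑ a, ∑ b, g a b * pdUp ginv b (t a) x) = ∑ a, pd a (t a) x := by
        simp only [pdUp]
        exact aux_gcontract' g ginv hginv (fun a u => pd u (t a) x)
      rw [hS1, hS2]
      ring
    have heq : ∑ a, ∑ b, g a b * (∑ r, pd r (k r a b) x) =
        ∑ a, ∑ b, g a b * (-(1/2) * (pdUp ginv a (t b) x + pdUp ginv b (t a) x)) :=
      Finset.sum_congr rfl fun a _ => Finset.sum_congr rfl fun b _ => by rw [part1 a b x]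
    rw [hL, hR] at heq
    linarith
  -- Part (iii)
  have hdpdt : ∀ (u b : Fin n), Differentiable ℝ (pd u (t b)) := fun u b =>
    aux_diff_of_contDiff (aux_contDiff_pd u (hts b))
  have part3 : ∀ (a : Fin n) (x : Fin n → ℝ),
      (∑ r, ∑ s, pd r (pd s (k r s a)) x) = -(1/2) * lap ginv (t a) x := by
    intro a x
    have e1 : (∑ r, ∑ s, pd r (pd s (k r s a)) x) =
        ∑ s, pd s (fun y => ∑ r, pd r (k r s a) y) x := by
      rw [Finset.sum_comm]
      refine Finset.sum_congr rfl fun s _ => ?_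
      rw [aux_pd_sum s Finset.univ (fun r => pd r (k r s a))
        (fun r _ => aux_diff_of_contDiff (aux_contDiff_pd r (hsmooth r s a))) x]
      exact Finset.sum_congr rfl fun r _ => aux_pd_comm r s (hsmooth r s a) x
    have hfe : ∀ s : Fin n, (fun y => ∑ r, pd r (k r s a) y) =
        (fun y => -(1/2) * ((∑ u, ginv s u * pd u (t a) y) + (∑ u, ginv a u * pd u (t s) y))) := by
      intro s; funext y
      have h := part1 s a y
      simpa [pdUp] using h
    have hFd : ∀ s : Fin n, Differentiable ℝ (fun y => ∑ u, ginv s u * pd u (t a) y) :=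
      fun s => Differentiable.fun_sum fun u _ => (hdpdt u a).const_mul _
    have hGd : ∀ s : Fin n, Differentiable ℝ (fun y => ∑ u, ginv a u * pd u (t s) y) :=
      fun s => Differentiable.fun_sum fun u _ => (hdpdt u s).const_mul _
    have e2 : ∀ s : Fin n, pd s (fun y => ∑ r, pd r (k r s a) y) x =
        -(1/2) * ((∑ u, ginv s u * pd s (pd u (t a)) x) +
          (∑ u, ginv a u * pd s (pd u (t s)) x)) := by
      intro s
      rw [hfe s]
      rw [aux_pd_const_mul s (-(1/2)) ((hFd s).fun_add (hGd s)) x]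
      congr 1
      rw [aux_pd_add s (hFd s) (hGd s) x]
      congr 1
      · rw [aux_pd_sum s Finset.univ _ (fun u _ => (hdpdt u a).const_mul _) x]
        exact Finset.sum_congr rfl fun u _ => aux_pd_const_mul s _ (hdpdt u a) x
      · rw [aux_pd_sum s Finset.univ _ (fun u _ => (hdpdt u s).const_mul _) x]
        exact Finset.sum_congr rfl fun u _ => aux_pd_const_mul s _ (hdpdt u s) x
    rw [e1]
    simp_rw [e2]
    have hz : ∑ s, ∑ u, ginv a u * pd s (pd u (t s)) x = 0 := by
      rw [Finset.sum_comm]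
      have hper : ∀ u : Fin n, (∑ s, ginv a u * pd s (pd u (t s)) x) =
          ginv a u * pd u (fun y => ∑ s, pd s (t s) y) x := by
        intro u
        rw [← Finset.mul_sum]
        congr 1
        rw [aux_pd_sum u Finset.univ (fun s => pd s (t s))
          (fun s _ => aux_diff_of_contDiff (aux_contDiff_pd s (hts s))) x]
        exact Finset.sum_congr rfl fun s _ => aux_pd_comm s u (hts s) x
      simp_rw [hper]
      have h0 : (fun y => ∑ s, pd s (t s) y) = (fun _ => (0 : ℝ)) := funext part2
      rw [h0]
      simp [pd]
    have hsum : ∑ s, -(1/2 : ℝ) * ((∑ u, ginv s u * pd s (pd u (t a)) x) +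
        (∑ u, ginv a u * pd s (pd u (t s)) x)) =
        -(1/2) * ((∑ s, ∑ u, ginv s u * pd s (pd u (t a)) x) +
          ∑ s, ∑ u, ginv a u * pd s (pd u (t s)) x) := by
      rw [← Finset.mul_sum, Finset.sum_add_distrib]
    rw [hsum, hz, add_zero]
    rfl
  exact ⟨part1, part2, part3⟩
end
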